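/- arXiv:2003.01561 — 5 statements merged into one kernel-verified Lean document; each statement's English description precedes it below -/
import Mathlib

section
/- Suppose A ⊆ ℤ^r is a finite set and its image A_1 under the first coordinate projection π_1 : ℤ^r → ℤ is ordered as A_1 = {a_{1,1} < ... < a_{1,n}}. Then ∫_{[0,1]^r} |∑_{a ∈ A} e(a·t)| dt ≥ C_MPS ∑_{j=1}^n (1/j) ∫_{[0,1]^{r-1}} |∑_{a* ∈ A_1*(a_{1,j})} e(a*·t)| dt, where C_MPS is the absolute constant from the McGehee–Pigno–Smith inequality. -/
open MeasureTheory

/-- `e z = e^{2πiz}`. -/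
noncomputable def e (x : ℝ) : ℂ := Complex.exp (2 * Real.pi * Complex.I * x)

lemma e_continuous : Continuous e := by
  unfold e; fun_prop

lemma e_add (a b : ℝ) : e (a + b) = e a * e b := by
  simp [e, ← Complex.exp_add]; ring_nf

/-- Theorem 1.2: if `A ⊆ ℤ^r` (here `r = r'+1 ≥ 1`) has first-coordinate projection
`A_1 = {a_{1,1} < … < a_{1,n}}`, then
`∫_{[0,1]^r} |∑_{a∈A} e(a·t)| dt ≥ C_MPS ∑_{j=1}^n (1/j) ∫_{[0,1]^{r-1}}
  |∑_{a* ∈ A_1^*(a_{1,j})} e(a*·t)| dt`,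
where `C_MPS` is the constant from the McGehee–Pigno–Smith inequality. -/
theorem littlewood_fibre_bound
    (C : ℝ) (hC : 0 < C)
    (hMPS : ∀ (n : ℕ) (a : Fin n → ℤ) (u : Fin n → ℂ), StrictMono a →
      (∫ t in (0:ℝ)..1, ‖∑ j, u j * e ((a j : ℝ) * t)‖) ≥
        C * ∑ j, ‖u j‖ / (j.1 + 1 : ℝ))
    (r' n : ℕ) (A : Finset (Fin (r' + 1) → ℤ))
    (a1 : Fin n → ℤ) (ha1 : StrictMono a1)
    (himg : A.image (fun v => v 0) = Finset.image a1 Finset.univ) :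
    (∫ t in Set.Icc (0 : Fin (r' + 1) → ℝ) 1,
        ‖∑ v ∈ A, e (∑ i, (v i : ℝ) * t i)‖) ≥
      C * ∑ j : Fin n, (1 / (j.1 + 1 : ℝ)) *
        ∫ t in Set.Icc (0 : Fin r' → ℝ) 1,
          ‖∑ v ∈ A.filter (fun v => v 0 = a1 j), e (∑ i, (v i.succ : ℝ) * t i)‖ := by
  classical
  set s₁ : Set ℝ := Set.Icc 0 1 with hs₁
  set s₂ : Set (Fin r' → ℝ) := Set.Icc 0 1 with hs₂
  set u : Fin n → (Fin r' → ℝ) → ℂ :=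
    fun j y => ∑ v ∈ A.filter (fun v => v 0 = a1 j), e (∑ i, (v i.succ : ℝ) * y i) with hu
  set G : ℝ × (Fin r' → ℝ) → ℝ :=
    fun p => ‖∑ j, u j p.2 * e ((a1 j : ℝ) * p.1)‖ with hG
  -- pointwise algebraic identity
  have key : ∀ (x : ℝ) (y : Fin r' → ℝ),
      (∑ v ∈ A, e (∑ i, (v i : ℝ) * (Fin.cons x y : Fin (r' + 1) → ℝ) i)) =
        ∑ j, u j y * e ((a1 j : ℝ) * x) := by
    intro x y
    have h1 : ∀ v : Fin (r' + 1) → ℤ,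
        e (∑ i, (v i : ℝ) * (Fin.cons x y : Fin (r' + 1) → ℝ) i)
          = e ((v 0 : ℝ) * x) * e (∑ i, (v i.succ : ℝ) * y i) := by
      intro v
      rw [Fin.sum_univ_succ, e_add]
      simp
    calc (∑ v ∈ A, e (∑ i, (v i : ℝ) * (Fin.cons x y : Fin (r' + 1) → ℝ) i))
        = ∑ b ∈ Finset.image a1 Finset.univ, ∑ v ∈ A.filter (fun v => v 0 = b),
            e (∑ i, (v i : ℝ) * (Fin.cons x y : Fin (r' + 1) → ℝ) i) := by
          refine (Finset.sum_fiberwise_of_maps_to ?_ _).symm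
          intro v hv
          rw [← himg]
          exact Finset.mem_image_of_mem _ hv
      _ = ∑ j, ∑ v ∈ A.filter (fun v => v 0 = a1 j),
            e (∑ i, (v i : ℝ) * (Fin.cons x y : Fin (r' + 1) → ℝ) i) :=
          Finset.sum_image fun i _ j _ h => ha1.injective h
      _ = ∑ j, u j y * e ((a1 j : ℝ) * x) := by
          refine Finset.sum_congr rfl fun j _ => ?_
          have : ∀ v ∈ A.filter (fun v => v 0 = a1 j),
              e (∑ i, (v i : ℝ) * (Fin.cons x y : Fin (r' + 1) → ℝ) i)
                = e ((a1 j : ℝ) * x) * e (∑ i, (v i.succ : ℝ) * y i) := by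
            intro v hv
            rw [h1 v, (Finset.mem_filter.mp hv).2]
          rw [Finset.sum_congr rfl this, ← Finset.mul_sum, mul_comm]
  -- continuity facts
  have contu : ∀ j, Continuous (u j) := fun j =>
    continuous_finset_sum _ fun v _ => e_continuous.comp (by fun_prop)
  have contG : Continuous G := by
    refine Continuous.norm (continuous_finset_sum _ fun j _ => ?_)
    exact ((contu j).comp continuous_snd).mul (e_continuous.comp (by fun_prop))
  have hcomp : IsCompact (s₁ ×ˢ s₂) := isCompact_Icc.prod isCompact_Icc
  have hint : Integrable G ((volume.restrict s₁).prod (volume.restrict s₂)) := by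
    rw [Measure.prod_restrict, ← Measure.volume_eq_prod]
    exact contG.continuousOn.integrableOn_compact hcomp
  -- the measurable equiv between (Fin (r'+1) → ℝ) and ℝ × (Fin r' → ℝ)
  have hmp := (MeasureTheory.volume_preserving_piFinSuccAbove
      (fun _ : Fin (r' + 1) => ℝ) 0).symm
  set E := MeasurableEquiv.piFinSuccAbove (fun _ : Fin (r' + 1) => ℝ) 0 with hE
  have hEsymm : ∀ p : ℝ × (Fin r' → ℝ), E.symm p = Fin.cons p.1 p.2 := by
    intro p
    show (Fin.insertNthEquiv (fun _ : Fin (r' + 1) => ℝ) 0) p = _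
    simp
    rfl
  have hpre : E.symm ⁻¹' (Set.Icc (0 : Fin (r' + 1) → ℝ) 1) = s₁ ×ˢ s₂ := by
    ext p
    simp only [Set.mem_preimage, hEsymm, Set.mem_Icc, Set.mem_prod, hs₁, hs₂,
      Pi.le_def, Fin.forall_fin_succ, Fin.cons_zero, Fin.cons_succ]
    constructor
    · rintro ⟨⟨h1, h2⟩, h3, h4⟩
      exact ⟨⟨h1, h3⟩, fun i => h2 i, fun i => h4 i⟩
    · rintro ⟨⟨h1, h3⟩, h2, h4⟩
      exact ⟨⟨h1, fun i => h2 i⟩, h3, fun i => h4 i⟩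
  -- pointwise MPS bound
  have hy : ∀ y : Fin r' → ℝ,
      (∫ x in s₁, G (x, y)) ≥ C * ∑ j, ‖u j y‖ / (j.1 + 1 : ℝ) := by
    intro y
    have h := hMPS n a1 (fun j => u j y) ha1
    rw [intervalIntegral.integral_of_le zero_le_one] at h
    rw [hs₁, integral_Icc_eq_integral_Ioc]
    exact h
  -- integrability of the two outer integrands
  have h₁ : IntegrableOn (fun y => ∫ x in s₁, G (x, y)) s₂ volume :=
    hint.integral_prod_right
  have contR : Continuous (fun y => C * ∑ j, ‖u j y‖ / (j.1 + 1 : ℝ)) := by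
    refine continuous_const.mul (continuous_finset_sum _ fun j _ => ?_)
    exact ((contu j).norm).div_const _
  have h₂ : IntegrableOn (fun y => C * ∑ j, ‖u j y‖ / (j.1 + 1 : ℝ)) s₂ volume :=
    contR.continuousOn.integrableOn_compact isCompact_Icc
  calc (∫ t in Set.Icc (0 : Fin (r' + 1) → ℝ) 1, ‖∑ v ∈ A, e (∑ i, (v i : ℝ) * t i)‖)
      = ∫ p in s₁ ×ˢ s₂, G p ∂(volume.prod volume) := by
        rw [← hmp.setIntegral_preimage_emb E.symm.measurableEmbedding
            (fun t => ‖∑ v ∈ A, e (∑ i, (v i : ℝ) * t i)‖) (Set.Icc 0 1),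
          hpre, ← Measure.volume_eq_prod]
        refine setIntegral_congr_fun (measurableSet_Icc.prod measurableSet_Icc)
          fun p _ => ?_
        rw [hEsymm, hG]
        exact congrArg norm (key p.1 p.2)
      _ = ∫ y in s₂, ∫ x in s₁, G (x, y) := by
        rw [← Measure.prod_restrict]
        exact integral_prod_symm _ hint
      _ ≥ ∫ y in s₂, C * ∑ j, ‖u j y‖ / (j.1 + 1 : ℝ) :=
        setIntegral_mono_on h₂ h₁ measurableSet_Icc fun y _ => hy y
      _ = C * ∑ j : Fin n, (1 / (j.1 + 1 : ℝ)) * ∫ y in s₂, ‖u j y‖ := by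
        rw [MeasureTheory.integral_const_mul]
        congr 1
        rw [integral_finset_sum _ fun j _ =>
          (((contu j).norm).div_const _).continuousOn.integrableOn_compact isCompact_Icc]
        refine Finset.sum_congr rfl fun j _ => ?_
        rw [MeasureTheory.integral_div, div_eq_mul_inv, one_div, inv_mul_eq_div]
        rfl
end

section
/- Let M and N be integers with 2 ≤ M < N and let R ≥ 2N + 4M + 1 be an integer. Then there exists a function K : ℤ → ℝ such that: (1) K(k) = 1 for all |k| ≤ N; (2) K(k) = 0 for all |k| ≥ N + 2M; and (3) (1/R) ∑_{j=1}^R |K̂(j/R)| ≤ 32π(2 + log(1 + N/M)), where K̂(t) = ∑_{k ∈ ℤ} K(k) e(kt). -/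
open MeasureTheory

namespace KernelAux
open Finset Real



theorem e_add (x y : ℝ) : e (x + y) = e x * e y := by
  rw [e, e, e, ← Complex.exp_add]; congr 1; push_cast; ring

lemma e_zpow (a : ℤ) (t : ℝ) : e ((a : ℝ) * t) = (e t) ^ a := by
  rw [e, e, ← Complex.exp_int_mul]; congr 1; push_cast; ring

lemma e_ne_zero (t : ℝ) : e t ≠ 0 := Complex.exp_ne_zero _

lemma norm_e (t : ℝ) : ‖e t‖ = 1 := by
  rw [e, Complex.norm_exp]
  have : (2 * (Real.pi : ℂ) * Complex.I * (t : ℂ)).re = 0 := by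
    simp [Complex.mul_re, Complex.mul_im]
  rw [this, Real.exp_zero]

lemma e_cos_sin (t : ℝ) :
    e t = (Real.cos (2*π*t) : ℂ) + (Real.sin (2*π*t) : ℂ) * Complex.I := by
  rw [e, show (2*(π:ℂ)*Complex.I*(t:ℂ)) = ((2*π*t : ℝ):ℂ) * Complex.I by push_cast; ring,
    Complex.exp_mul_I, Complex.ofReal_cos, Complex.ofReal_sin]

lemma norm_e_sub_one (t : ℝ) : ‖e t - 1‖ = 2 * |Real.sin (π * t)| := by
  have h := e_cos_sin t
  rw [show (2:ℝ) * |Real.sin (π*t)| = Real.sqrt ((2*|Real.sin (π*t)|)^2) by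
    rw [Real.sqrt_sq (by positivity)]]
  rw [Complex.norm_def]
  congr 1
  have hre : (e t - 1).re = Real.cos (2*π*t) - 1 := by
    rw [h]
    simp only [Complex.sub_re, Complex.add_re, Complex.ofReal_re, Complex.mul_re,
      Complex.I_re, Complex.I_im, Complex.ofReal_im, Complex.one_re]
    ring
  have him : (e t - 1).im = Real.sin (2*π*t) := by
    rw [h]
    simp only [Complex.sub_im, Complex.add_im, Complex.ofReal_im, Complex.mul_im,
      Complex.I_re, Complex.I_im, Complex.ofReal_re, Complex.one_im]
    ring
  rw [Complex.normSq_apply, hre, him]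
  have h1 : Real.sin (π*t)^2 = 1/2 - Real.cos (2*(π*t))/2 := Real.sin_sq_eq_half_sub _
  have h2 : Real.sin (2*π*t)^2 + Real.cos (2*π*t)^2 = 1 := Real.sin_sq_add_cos_sq _
  have h3 : 2*(π*t) = 2*π*t := by ring
  rw [h3] at h1
  nlinarith [sq_abs (Real.sin (π*t))]





noncomputable def D (L : ℤ) (t : ℝ) : ℂ := ∑ a ∈ Finset.Icc (-L) L, e ((a:ℝ) * t)

lemma norm_D_le_card {L : ℤ} (hL : 0 ≤ L) (t : ℝ) : ‖D L t‖ ≤ 2*(L:ℝ)+1 := by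
  have h1 : ‖D L t‖ ≤ ∑ a ∈ Finset.Icc (-L) L, ‖e ((a:ℝ)*t)‖ := norm_sum_le _ _
  have h2 : ∑ a ∈ Finset.Icc (-L) L, ‖e ((a:ℝ)*t)‖ = ((Finset.Icc (-L) L).card : ℝ) := by
    calc ∑ a ∈ Finset.Icc (-L) L, ‖e ((a:ℝ)*t)‖ = ∑ _a ∈ Finset.Icc (-L) L, (1:ℝ) :=
          Finset.sum_congr rfl (fun a _ => norm_e _)
    _ = ((Finset.Icc (-L) L).card : ℝ) := by simp
  have h3 : ((Finset.Icc (-L) L).card : ℝ) = 2*(L:ℝ)+1 := by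
    rw [Int.card_Icc]
    have h4 : ((L + 1 - -L).toNat : ℤ) = 2*L+1 := by
      rw [Int.toNat_of_nonneg (by omega)]; ring
    have h5 : (((L + 1 - -L).toNat : ℤ) : ℝ) = ((2*L+1 : ℤ) : ℝ) := by rw [h4]
    push_cast at h5
    linarith [h5]
  linarith [h2 ▸ h1, h3 ▸ (h2 ▸ h1)]

lemma D_mul_sub (t : ℝ) : ∀ L : ℤ, 0 ≤ L → D L t * (e t - 1) = (e t)^(L+1) - (e t)^(-L) := by
  refine Int.le_induction ?_ ?_
  · have : D 0 t = 1 := by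
      simp only [D, show Finset.Icc (0:ℤ) 0 = {0} from rfl, Finset.sum_singleton]
      simpa using e_zpow 0 t
    rw [this]; simp [zpow_one]
  · intro n hn ih
    set z := e t with hz
    have hz0 : z ≠ 0 := e_ne_zero t
    have hset : Finset.Icc (-(n+1)) (n+1) =
        insert (-(n+1)) (insert (n+1) (Finset.Icc (-n) n)) := by
      ext x; simp only [mem_Icc, mem_insert]; omega
    have hDsucc : D (n+1) t = z^(-(n+1)) + (z^(n+1) + D n t) := by
      rw [D, hset, Finset.sum_insert (by simp only [mem_insert, mem_Icc]; omega),
        Finset.sum_insert (by simp only [mem_Icc]; omega)]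
      rw [e_zpow (-(n+1)) t, e_zpow (n+1) t]
      rfl
    have hA : z^(-n) = z^(-(n+1)) * z := by
      rw [← zpow_add_one₀ hz0]; congr 1; ring
    have hB : z^(n+1+1) = z^(n+1) * z := by
      rw [← zpow_add_one₀ hz0]
    rw [hDsucc]
    linear_combination ih - hA - hB

lemma norm_D_le_inv_sin {L : ℤ} (hL : 0 ≤ L) {t : ℝ} (h : Real.sin (π * t) ≠ 0) :
    ‖D L t‖ ≤ 1 / |Real.sin (π * t)| := by
  have key := D_mul_sub t L hL
  have h2 : ‖D L t‖ * ‖e t - 1‖ ≤ 2 := by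
    rw [← norm_mul, key]
    calc ‖(e t)^(L+1) - (e t)^(-L)‖ ≤ ‖(e t)^(L+1)‖ + ‖(e t)^(-L)‖ := norm_sub_le _ _
    _ = 2 := by rw [norm_zpow, norm_zpow, norm_e]; norm_num
  rw [norm_e_sub_one] at h2
  have habs : 0 < |Real.sin (π*t)| := abs_pos.2 h
  rw [le_div_iff₀ habs]
  nlinarith [norm_nonneg (D L t)]





noncomputable def K (M N : ℤ) (k : ℤ) : ℝ :=
  (∑ b ∈ Finset.Icc (-(M-1)) (M-1), if |k - b| ≤ N + M then (1:ℝ) else 0) / (2*M-1)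

lemma K_one {M N : ℤ} (hM : 2 ≤ M) (k : ℤ) (hk : |k| ≤ N) : K M N k = 1 := by
  have habs := abs_le.1 hk
  rw [K, Finset.sum_congr rfl (fun b hb => by
    rw [if_pos]
    rw [mem_Icc] at hb
    rw [abs_le]
    omega)]
  rw [Finset.sum_const, Int.card_Icc]
  have h4 : ((M - 1 + 1 - -(M-1)).toNat : ℤ) = 2*M-1 := by
    rw [Int.toNat_of_nonneg (by omega)]; ring
  have h5 : (((M - 1 + 1 - -(M-1)).toNat : ℤ) : ℝ) = ((2*M-1 : ℤ) : ℝ) := by rw [h4]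
  push_cast at h5
  rw [nsmul_eq_mul, h5, mul_one, div_self]
  have : (2:ℝ) ≤ (M:ℝ) := by exact_mod_cast hM
  linarith

lemma K_zero {M N : ℤ} (hM : 2 ≤ M) (hMN : M < N) (k : ℤ) (hk : N + 2*M ≤ |k|) :
    K M N k = 0 := by
  rw [le_abs] at hk
  rw [K, Finset.sum_eq_zero, zero_div]
  intro b hb
  rw [mem_Icc] at hb
  rw [if_neg]
  rw [abs_le]
  omega

lemma Khat_eq (M N : ℤ) (hM : 2 ≤ M) (hMN : M < N) (t : ℝ) :
    ∑ k ∈ Finset.Icc (-(N + 2*M)) (N + 2*M), ((K M N k : ℝ) : ℂ) * e ((k:ℝ) * t)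
      = (1/(2*(M:ℂ)-1)) * D (M-1) t * D (N+M) t := by
  have hc : (2*(M:ℂ)-1) ≠ 0 := by
    intro h
    have : ((2*M-1 : ℤ) : ℂ) = 0 := by push_cast; linear_combination h
    have h2 : (2*M-1 : ℤ) = 0 := by exact_mod_cast this
    omega
  have hKc : ∀ k : ℤ, ((K M N k : ℝ) : ℂ) =
      (∑ b ∈ Finset.Icc (-(M-1)) (M-1), if |k - b| ≤ N + M then (1:ℂ) else 0) / (2*(M:ℂ)-1) := by
    intro k
    rw [K]
    push_cast [apply_ite (fun x : ℝ => (x:ℂ))]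
    ring
  calc ∑ k ∈ Finset.Icc (-(N + 2*M)) (N + 2*M), ((K M N k : ℝ) : ℂ) * e ((k:ℝ) * t)
      = ∑ k ∈ Finset.Icc (-(N + 2*M)) (N + 2*M), (∑ b ∈ Finset.Icc (-(M-1)) (M-1),
          (if |k - b| ≤ N + M then (1:ℂ) else 0) * e ((k:ℝ) * t)) / (2*(M:ℂ)-1) := by
        refine Finset.sum_congr rfl (fun k _ => ?_)
        rw [hKc k, div_mul_eq_mul_div, Finset.sum_mul]
    _ = (∑ b ∈ Finset.Icc (-(M-1)) (M-1), ∑ k ∈ Finset.Icc (-(N + 2*M)) (N + 2*M),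
          (if |k - b| ≤ N + M then (1:ℂ) else 0) * e ((k:ℝ) * t)) / (2*(M:ℂ)-1) := by
        rw [← Finset.sum_div, Finset.sum_comm]
    _ = (∑ b ∈ Finset.Icc (-(M-1)) (M-1), e ((b:ℝ)*t) * D (N+M) t) / (2*(M:ℂ)-1) := by
        refine congrArg (· / (2*(M:ℂ)-1)) (Finset.sum_congr rfl (fun b hb => ?_))
        rw [mem_Icc] at hb
        have hfil : Finset.filter (fun k => |k - b| ≤ N+M) (Finset.Icc (-(N+2*M)) (N+2*M))
            = Finset.Icc (b - (N+M)) (b + (N+M)) := by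
          ext x; simp only [Finset.mem_filter, Finset.mem_Icc, abs_le]; omega
        calc ∑ k ∈ Finset.Icc (-(N + 2*M)) (N + 2*M),
              (if |k - b| ≤ N + M then (1:ℂ) else 0) * e ((k:ℝ) * t)
            = ∑ k ∈ Finset.filter (fun k => |k - b| ≤ N+M) (Finset.Icc (-(N+2*M)) (N+2*M)),
                e ((k:ℝ) * t) := by
              rw [Finset.sum_filter]
              refine Finset.sum_congr rfl (fun k _ => ?_)
              split <;> simp
          _ = ∑ k ∈ Finset.Icc (b - (N+M)) (b + (N+M)), e ((k:ℝ) * t) := by rw [hfil]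
          _ = ∑ a ∈ Finset.Icc (-(N+M)) (N+M), e (((b + a : ℤ):ℝ) * t) := by
              rw [show Finset.Icc (b - (N+M)) (b + (N+M))
                  = Finset.map (addLeftEmbedding b) (Finset.Icc (-(N+M)) (N+M)) by
                rw [Finset.map_add_left_Icc, show b + -(N+M) = b - (N+M) by ring]]
              rw [Finset.sum_map]
              rfl
          _ = e ((b:ℝ)*t) * D (N+M) t := by
              rw [D, Finset.mul_sum]
              refine Finset.sum_congr rfl (fun a _ => ?_)
              push_cast
              rw [add_mul, e_add]
    _ = (1/(2*(M:ℂ)-1)) * D (M-1) t * D (N+M) t := by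
        rw [← Finset.sum_mul, ← D]
        ring



lemma Ioc_insert_top {a b : ℤ} (h : a ≤ b) :
    Finset.Ioc a (b+1) = insert (b+1) (Finset.Ioc a b) := by
  ext x; simp only [mem_Ioc, mem_insert]; omega

lemma harm_sum {a : ℤ} (ha : 1 ≤ a) :
    ∀ b : ℤ, a ≤ b → ∑ j ∈ Finset.Ioc a b, 1/(j:ℝ) ≤ Real.log b - Real.log a := by
  refine Int.le_induction ?_ ?_
  · simp
  · intro b hb ih
    rw [Ioc_insert_top hb, Finset.sum_insert (by simp only [mem_Ioc]; omega)]
    have hb1 : (1:ℝ) ≤ (b:ℝ) := by exact_mod_cast le_trans ha hb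
    have hkey : 1/((b:ℝ)+1) ≤ Real.log ((b:ℝ)+1) - Real.log b := by
      have h := Real.log_le_sub_one_of_pos (x := (b:ℝ)/((b:ℝ)+1)) (by positivity)
      rw [Real.log_div (by linarith) (by linarith)] at h
      have heq : (b:ℝ)/((b:ℝ)+1) - 1 = -(1/((b:ℝ)+1)) := by field_simp; ring
      linarith [heq ▸ h]
    have ih' := ih
    push_cast
    push_cast at ih' hkey
    linarith
  
lemma sq_sum {a : ℤ} (ha : 1 ≤ a) :
    ∀ b : ℤ, a ≤ b → ∑ j ∈ Finset.Ioc a b, 1/(j:ℝ)^2 ≤ 1/(a:ℝ) - 1/(b:ℝ) := by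
  refine Int.le_induction ?_ ?_
  · simp
  · intro b hb ih
    rw [Ioc_insert_top hb, Finset.sum_insert (by simp only [mem_Ioc]; omega)]
    have hb1 : (1:ℝ) ≤ (b:ℝ) := by exact_mod_cast le_trans ha hb
    have hkey : 1/((b:ℝ)+1)^2 ≤ 1/(b:ℝ) - 1/((b:ℝ)+1) := by
      rw [div_sub_div _ _ (by linarith) (by linarith)]
      rw [div_le_div_iff₀ (by positivity) (by positivity)]
      nlinarith
    push_cast
    push_cast at ih hkey
    linarith

end KernelAux
set_option maxHeartbeats 2000000 in
/-- Lemma 3.3: for integers `2 ≤ M < N` and `R ≥ 2N + 4M + 1` there is `K : ℤ → ℝ` with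
`K(k) = 1` for `|k| ≤ N`, `K(k) = 0` for `|k| ≥ N + 2M`, and
`(1/R) ∑_{j=1}^R |K̂(j/R)| ≤ 32π(2 + log(1 + N/M))`, where
`K̂(t) = ∑_k K(k) e(kt)` (a finite sum since `K` is supported on `|k| < N + 2M`). -/
theorem kernel_exists
    (M N R : ℤ) (hM : 2 ≤ M) (hMN : M < N) (hR : 2 * N + 4 * M + 1 ≤ R) :
    ∃ K : ℤ → ℝ,
      (∀ k : ℤ, |k| ≤ N → K k = 1) ∧
      (∀ k : ℤ, N + 2 * M ≤ |k| → K k = 0) ∧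
      (1 / (R : ℝ)) * ∑ j ∈ Finset.Icc (1 : ℤ) R,
          ‖∑ k ∈ Finset.Icc (-(N + 2 * M)) (N + 2 * M),
              (K k : ℂ) * e ((k : ℝ) * ((j : ℝ) / (R : ℝ)))‖ ≤
        32 * Real.pi * (2 + Real.log (1 + (N : ℝ) / (M : ℝ))) := by
  classical
  refine ⟨KernelAux.K M N, fun k hk => KernelAux.K_one hM k hk,
    fun k hk => KernelAux.K_zero hM hMN k hk, ?_⟩
  set P : ℤ := 2*(N+M)+1 with hPdef
  set c : ℤ := 2*M-1 with hcdef
  set m1 : ℤ := R / (2*P) + 1 with hm1def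
  set m2 : ℤ := R / (2*c) + 1 with hm2def
  have hPpos : 0 < P := by omega
  have hcpos : 0 < c := by omega
  have hc3 : 3 ≤ c := by omega
  have hcP : c ≤ P := by omega
  have hR15 : 15 ≤ R := by omega
  have hPR : P ≤ R := by omega
  have hq1 : R / (2*P) * (2*P) ≤ R := Int.ediv_mul_le R (by omega)
  have hq1' : R < (R/(2*P) + 1) * (2*P) := Int.lt_ediv_add_one_mul_self R (by omega)
  have hq2 : R / (2*c) * (2*c) ≤ R := Int.ediv_mul_le R (by omega)
  have hq2' : R < (R/(2*c) + 1) * (2*c) := Int.lt_ediv_add_one_mul_self R (by omega)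
  have hd1nn : 0 ≤ R / (2*P) := Int.ediv_nonneg (by omega) (by omega)
  have hd2nn : 0 ≤ R / (2*c) := Int.ediv_nonneg (by omega) (by omega)
  have hm1pos : 1 ≤ m1 := by omega
  have hm12 : m1 ≤ m2 := by
    have h1 : R/(2*P)*(2*c) ≤ R/(2*P)*(2*P) :=
      mul_le_mul_of_nonneg_left (by omega) hd1nn
    have h2 : R/(2*P) ≤ R/(2*c) := (Int.le_ediv_iff_mul_le (by omega)).2 (le_trans h1 hq1)
    omega
  have hm2R : m2 ≤ R - 1 := by
    have h1 : R/(2*c)*6 ≤ R/(2*c)*(2*c) := mul_le_mul_of_nonneg_left (by omega) hd2nn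
    have h2 : R/(2*c)*6 ≤ R := le_trans h1 hq2
    omega
  have hrr15 : (15:ℝ) ≤ (R:ℝ) := by exact_mod_cast hR15
  have hrpos : (0:ℝ) < (R:ℝ) := by linarith
  have hppos : (0:ℝ) < (P:ℝ) := by exact_mod_cast hPpos
  have hccpos : (0:ℝ) < (c:ℝ) := by exact_mod_cast hcpos
  have hcc3 : (3:ℝ) ≤ (c:ℝ) := by exact_mod_cast hc3
  have hppR : (P:ℝ) ≤ (R:ℝ) := by exact_mod_cast hPR
  have hccP : (c:ℝ) ≤ (P:ℝ) := by exact_mod_cast hcP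
  have hRne : (R:ℝ) ≠ 0 := ne_of_gt hrpos
  have hPne : (P:ℝ) ≠ 0 := ne_of_gt hppos
  have hcne : (c:ℝ) ≠ 0 := ne_of_gt hccpos
  have hm1l : (R:ℝ)/(2*(P:ℝ)) ≤ (m1:ℝ) := by
    have h : (R:ℝ) < (m1:ℝ)*(2*(P:ℝ)) := by exact_mod_cast hq1'
    rw [div_le_iff₀ (by positivity)]
    linarith
  have hm1u : (m1:ℝ) ≤ (R:ℝ)/(2*(P:ℝ)) + 1 := by
    have h0 : ((R/(2*P) : ℤ):ℝ)*(2*(P:ℝ)) ≤ (R:ℝ) := by exact_mod_cast hq1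
    have h1 : ((R/(2*P) : ℤ):ℝ) ≤ (R:ℝ)/(2*(P:ℝ)) := by
      rw [le_div_iff₀ (by positivity)]; linarith
    have h2 : (m1:ℝ) = ((R/(2*P) : ℤ):ℝ) + 1 := by rw [hm1def]; push_cast; ring
    linarith
  have hm2l : (R:ℝ)/(2*(c:ℝ)) ≤ (m2:ℝ) := by
    have h : (R:ℝ) < (m2:ℝ)*(2*(c:ℝ)) := by exact_mod_cast hq2'
    rw [div_le_iff₀ (by positivity)]
    linarith
  have hm2u : (m2:ℝ) ≤ (R:ℝ)/(2*(c:ℝ)) + 1 := by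
    have h0 : ((R/(2*c) : ℤ):ℝ)*(2*(c:ℝ)) ≤ (R:ℝ) := by exact_mod_cast hq2
    have h1 : ((R/(2*c) : ℤ):ℝ) ≤ (R:ℝ)/(2*(c:ℝ)) := by
      rw [le_div_iff₀ (by positivity)]; linarith
    have h2 : (m2:ℝ) = ((R/(2*c) : ℤ):ℝ) + 1 := by rw [hm2def]; push_cast; ring
    linarith
  have hμ1pos : (1:ℝ) ≤ (m1:ℝ) := by exact_mod_cast hm1pos
  have hμ2pos : (1:ℝ) ≤ (m2:ℝ) := by exact_mod_cast le_trans hm1pos hm12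
  -- the transform and its norm
  set F : ℤ → ℝ := fun j => ‖∑ k ∈ Finset.Icc (-(N + 2 * M)) (N + 2 * M),
      (KernelAux.K M N k : ℂ) * e ((k : ℝ) * ((j : ℝ) / (R : ℝ)))‖ with hFdef
  have normF : ∀ j : ℤ, F j = (1/(c:ℝ)) *
      (‖KernelAux.D (M-1) ((j:ℝ)/(R:ℝ))‖ * ‖KernelAux.D (N+M) ((j:ℝ)/(R:ℝ))‖) := by
    intro j
    rw [hFdef]
    simp only
    rw [KernelAux.Khat_eq M N hM hMN ((j:ℝ)/(R:ℝ))]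
    rw [norm_mul, norm_mul]
    have hco : ‖(1/(2*(M:ℂ)-1))‖ = 1/(c:ℝ) := by
      have h : (2*(M:ℂ)-1) = (((c:ℤ):ℝ) : ℂ) := by rw [hcdef]; push_cast; ring
      rw [h, norm_div, norm_one, Complex.norm_real, Real.norm_eq_abs, abs_of_pos hccpos]
    rw [hco]; ring
  have hDM1 : ∀ t : ℝ, ‖KernelAux.D (M-1) t‖ ≤ (c:ℝ) := by
    intro t
    have h := KernelAux.norm_D_le_card (show (0:ℤ) ≤ M-1 by omega) t
    have h2 : 2*(((M-1:ℤ)):ℝ)+1 = (c:ℝ) := by rw [hcdef]; push_cast; ring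
    linarith [h2 ▸ h]
  have hDNM : ∀ t : ℝ, ‖KernelAux.D (N+M) t‖ ≤ (P:ℝ) := by
    intro t
    have h := KernelAux.norm_D_le_card (show (0:ℤ) ≤ N+M by omega) t
    have h2 : 2*(((N+M:ℤ)):ℝ)+1 = (P:ℝ) := by rw [hPdef]; push_cast; ring
    linarith [h2 ▸ h]
  have B1 : ∀ j : ℤ, F j ≤ (P:ℝ) := by
    intro j
    rw [normF j]
    have h1 := hDM1 ((j:ℝ)/(R:ℝ))
    have h2 := hDNM ((j:ℝ)/(R:ℝ))
    have h3 : ‖KernelAux.D (M-1) ((j:ℝ)/(R:ℝ))‖ * ‖KernelAux.D (N+M) ((j:ℝ)/(R:ℝ))‖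
        ≤ (c:ℝ)*(P:ℝ) := mul_le_mul h1 h2 (norm_nonneg _) (by linarith)
    rw [show (1/(c:ℝ)) * (‖KernelAux.D (M-1) ((j:ℝ)/(R:ℝ))‖ * ‖KernelAux.D (N+M) ((j:ℝ)/(R:ℝ))‖)
        = (‖KernelAux.D (M-1) ((j:ℝ)/(R:ℝ))‖ * ‖KernelAux.D (N+M) ((j:ℝ)/(R:ℝ))‖)/(c:ℝ) by ring,
      div_le_iff₀ hccpos]
    linarith
  -- the majorant
  set g : ℤ → ℝ := fun m =>
    min ((P:ℝ)) (min ((R:ℝ)/(2*(m:ℝ))) ((R:ℝ)^2/(4*(c:ℝ)*(m:ℝ)^2))) with hgdef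
  have hgnonneg : ∀ m : ℤ, 1 ≤ m → 0 ≤ g m := by
    intro m hm
    have hm' : (1:ℝ) ≤ (m:ℝ) := by exact_mod_cast hm
    exact le_min (by positivity) (le_min (by positivity) (by positivity))
  have perj : ∀ j ∈ Finset.Ioc (0:ℤ) (R-1), F j ≤ g j + g (R - j) := by
    intro j hj
    rw [Finset.mem_Ioc] at hj
    have hm1' : 1 ≤ min j (R-j) := by omega
    have hm2' : 2*(min j (R-j)) ≤ R := by omega
    have hmr : (1:ℝ) ≤ ((min j (R-j) : ℤ):ℝ) := by exact_mod_cast hm1'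
    have hmR : 2*((min j (R-j) : ℤ):ℝ) ≤ (R:ℝ) := by exact_mod_cast hm2'
    have hjpos : (0:ℝ) < (j:ℝ) := by exact_mod_cast (by omega : (0:ℤ) < j)
    have hjR : (j:ℝ) ≤ (R:ℝ) - 1 := by exact_mod_cast (by omega : j ≤ R - 1)
    have hspos : 0 < Real.sin (Real.pi * ((j:ℝ)/(R:ℝ))) := by
      apply Real.sin_pos_of_pos_of_lt_pi
      · positivity
      · have h : (j:ℝ)/(R:ℝ) < 1 := by rw [div_lt_one hrpos]; linarith
        exact (mul_lt_iff_lt_one_right Real.pi_pos).2 h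
    have hslb : 2*((min j (R-j) : ℤ):ℝ)/(R:ℝ) ≤ Real.sin (Real.pi * ((j:ℝ)/(R:ℝ))) := by
      rcases min_choice j (R-j) with hmin | hmin
      · -- min = j, so j ≤ R - j
        have hjle : 2*j ≤ R := by omega
        have hjle' : 2*(j:ℝ) ≤ (R:ℝ) := by exact_mod_cast hjle
        have hx1 : 0 ≤ Real.pi * ((j:ℝ)/(R:ℝ)) := by positivity
        have hx2 : Real.pi * ((j:ℝ)/(R:ℝ)) ≤ Real.pi / 2 := by
          have hhalf : (j:ℝ)/(R:ℝ) ≤ 1/2 := by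
            rw [div_le_div_iff₀ hrpos two_pos]; linarith
          calc Real.pi * ((j:ℝ)/(R:ℝ)) ≤ Real.pi * (1/2) :=
                mul_le_mul_of_nonneg_left hhalf (le_of_lt Real.pi_pos)
            _ = Real.pi/2 := by ring
        have h := Real.mul_le_sin hx1 hx2
        have heq : 2 / Real.pi * (Real.pi * ((j:ℝ)/(R:ℝ))) = 2*(j:ℝ)/(R:ℝ) := by
          field_simp
        rw [heq] at h
        rw [hmin]
        exact h
      · -- min = R - j, so R - j ≤ j
        have hjle : 2*(R-j) ≤ R := by omega
        have hjle' : 2*((R:ℝ)-(j:ℝ)) ≤ (R:ℝ) := by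
          have : ((R-j:ℤ):ℝ) = (R:ℝ)-(j:ℝ) := by push_cast; ring
          exact_mod_cast hjle
        have hx1 : 0 ≤ Real.pi * (((R:ℝ)-(j:ℝ))/(R:ℝ)) := by
          have : (0:ℝ) ≤ (R:ℝ)-(j:ℝ) := by linarith
          positivity
        have hx2 : Real.pi * (((R:ℝ)-(j:ℝ))/(R:ℝ)) ≤ Real.pi / 2 := by
          have hhalf : ((R:ℝ)-(j:ℝ))/(R:ℝ) ≤ 1/2 := by
            rw [div_le_div_iff₀ hrpos two_pos]; linarith
          calc Real.pi * (((R:ℝ)-(j:ℝ))/(R:ℝ)) ≤ Real.pi * (1/2) :=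
                mul_le_mul_of_nonneg_left hhalf (le_of_lt Real.pi_pos)
            _ = Real.pi/2 := by ring
        have h := Real.mul_le_sin hx1 hx2
        have heq : 2 / Real.pi * (Real.pi * (((R:ℝ)-(j:ℝ))/(R:ℝ)))
            = 2*((R:ℝ)-(j:ℝ))/(R:ℝ) := by field_simp
        rw [heq] at h
        have hsin_eq : Real.sin (Real.pi * (((R:ℝ)-(j:ℝ))/(R:ℝ)))
            = Real.sin (Real.pi * ((j:ℝ)/(R:ℝ))) := by
          rw [show Real.pi * (((R:ℝ)-(j:ℝ))/(R:ℝ)) = Real.pi - Real.pi * ((j:ℝ)/(R:ℝ)) by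
            field_simp]
          exact Real.sin_pi_sub _
        rw [hsin_eq] at h
        rw [hmin]
        have hcast : ((R-j:ℤ):ℝ) = (R:ℝ)-(j:ℝ) := by push_cast; ring
        rw [hcast]
        exact h
    -- bounds on F j
    have hsne : Real.sin (Real.pi * ((j:ℝ)/(R:ℝ))) ≠ 0 := ne_of_gt hspos
    have habs : |Real.sin (Real.pi * ((j:ℝ)/(R:ℝ)))| = Real.sin (Real.pi * ((j:ℝ)/(R:ℝ))) :=
      abs_of_pos hspos
    have d1c := hDM1 ((j:ℝ)/(R:ℝ))
    have d1s : ‖KernelAux.D (M-1) ((j:ℝ)/(R:ℝ))‖ ≤ 1/Real.sin (Real.pi * ((j:ℝ)/(R:ℝ))) := by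
      have h := KernelAux.norm_D_le_inv_sin (show (0:ℤ) ≤ M-1 by omega) hsne
      rwa [habs] at h
    have d2s : ‖KernelAux.D (N+M) ((j:ℝ)/(R:ℝ))‖ ≤ 1/Real.sin (Real.pi * ((j:ℝ)/(R:ℝ))) := by
      have h := KernelAux.norm_D_le_inv_sin (show (0:ℤ) ≤ N+M by omega) hsne
      rwa [habs] at h
    have hmlbpos : (0:ℝ) < 2*((min j (R-j) : ℤ):ℝ)/(R:ℝ) := by positivity
    have h1s : 1/Real.sin (Real.pi * ((j:ℝ)/(R:ℝ))) ≤ (R:ℝ)/(2*((min j (R-j) : ℤ):ℝ)) := by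
      have h := one_div_le_one_div_of_le hmlbpos hslb
      rwa [one_div_div] at h
    have h1snn : 0 ≤ 1/Real.sin (Real.pi * ((j:ℝ)/(R:ℝ))) := by positivity
    have hFm : F j ≤ g (min j (R-j)) := by
      rw [hgdef]
      simp only
      refine le_min (B1 j) (le_min ?_ ?_)
      · -- F j ≤ R/(2 min)
        rw [normF j]
        have h3 : ‖KernelAux.D (M-1) ((j:ℝ)/(R:ℝ))‖ * ‖KernelAux.D (N+M) ((j:ℝ)/(R:ℝ))‖
            ≤ (c:ℝ) * (1/Real.sin (Real.pi * ((j:ℝ)/(R:ℝ)))) :=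
          mul_le_mul d1c d2s (norm_nonneg _) (by linarith)
        have h4 : (1/(c:ℝ)) * ((c:ℝ) * (1/Real.sin (Real.pi * ((j:ℝ)/(R:ℝ)))))
            = 1/Real.sin (Real.pi * ((j:ℝ)/(R:ℝ))) := by
          field_simp
        calc (1/(c:ℝ)) * (‖KernelAux.D (M-1) ((j:ℝ)/(R:ℝ))‖ * ‖KernelAux.D (N+M) ((j:ℝ)/(R:ℝ))‖)
            ≤ (1/(c:ℝ)) * ((c:ℝ) * (1/Real.sin (Real.pi * ((j:ℝ)/(R:ℝ))))) :=
              mul_le_mul_of_nonneg_left h3 (by positivity)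
          _ = 1/Real.sin (Real.pi * ((j:ℝ)/(R:ℝ))) := h4
          _ ≤ (R:ℝ)/(2*((min j (R-j) : ℤ):ℝ)) := h1s
      · -- F j ≤ R^2/(4 c min^2)
        rw [normF j]
        have h3 : ‖KernelAux.D (M-1) ((j:ℝ)/(R:ℝ))‖ * ‖KernelAux.D (N+M) ((j:ℝ)/(R:ℝ))‖
            ≤ (1/Real.sin (Real.pi * ((j:ℝ)/(R:ℝ)))) * (1/Real.sin (Real.pi * ((j:ℝ)/(R:ℝ)))) :=
          mul_le_mul d1s d2s (norm_nonneg _) h1snn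
        have h5 : (1/Real.sin (Real.pi * ((j:ℝ)/(R:ℝ)))) * (1/Real.sin (Real.pi * ((j:ℝ)/(R:ℝ))))
            ≤ ((R:ℝ)/(2*((min j (R-j) : ℤ):ℝ))) * ((R:ℝ)/(2*((min j (R-j) : ℤ):ℝ))) :=
          mul_le_mul h1s h1s h1snn (by positivity)
        have h6 : (1/(c:ℝ)) * (((R:ℝ)/(2*((min j (R-j) : ℤ):ℝ))) * ((R:ℝ)/(2*((min j (R-j) : ℤ):ℝ))))
            = (R:ℝ)^2/(4*(c:ℝ)*((min j (R-j) : ℤ):ℝ)^2) := by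
          field_simp
          ring
        calc (1/(c:ℝ)) * (‖KernelAux.D (M-1) ((j:ℝ)/(R:ℝ))‖ * ‖KernelAux.D (N+M) ((j:ℝ)/(R:ℝ))‖)
            ≤ (1/(c:ℝ)) * (((R:ℝ)/(2*((min j (R-j) : ℤ):ℝ))) * ((R:ℝ)/(2*((min j (R-j) : ℤ):ℝ)))) :=
              mul_le_mul_of_nonneg_left (le_trans h3 h5) (by positivity)
          _ = (R:ℝ)^2/(4*(c:ℝ)*((min j (R-j) : ℤ):ℝ)^2) := h6
    rcases min_choice j (R-j) with hmin | hmin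
    · rw [hmin] at hFm
      exact le_trans hFm (le_add_of_nonneg_right (hgnonneg (R-j) (by omega)))
    · rw [hmin] at hFm
      exact le_trans hFm (le_add_of_nonneg_left (hgnonneg j (by omega)))
  -- sum assembly
  have hsplitR : ∑ j ∈ Finset.Icc (1:ℤ) R, F j = (∑ j ∈ Finset.Ioc (0:ℤ) (R-1), F j) + F R := by
    have h1 : Finset.Icc (1:ℤ) R = insert R (Finset.Ioc 0 (R-1)) := by
      ext x; simp only [Finset.mem_Icc, Finset.mem_Ioc, Finset.mem_insert]; omega
    rw [h1, Finset.sum_insert (by simp only [Finset.mem_Ioc]; omega)]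
    ring
  have hrefl : ∑ j ∈ Finset.Ioc (0:ℤ) (R-1), g (R - j) = ∑ j ∈ Finset.Ioc (0:ℤ) (R-1), g j := by
    refine Finset.sum_nbij' (fun j => R - j) (fun j => R - j) ?_ ?_ ?_ ?_ ?_
    · intro a ha; simp only [Finset.mem_Ioc] at *; omega
    · intro a ha; simp only [Finset.mem_Ioc] at *; omega
    · intro a _; omega
    · intro a _; omega
    · intro a _; rfl
  have hsum1 : ∑ j ∈ Finset.Ioc (0:ℤ) (R-1), F j ≤ 2 * ∑ j ∈ Finset.Ioc (0:ℤ) (R-1), g j := by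
    calc ∑ j ∈ Finset.Ioc (0:ℤ) (R-1), F j
        ≤ ∑ j ∈ Finset.Ioc (0:ℤ) (R-1), (g j + g (R - j)) := Finset.sum_le_sum perj
      _ = (∑ j ∈ Finset.Ioc (0:ℤ) (R-1), g j) + ∑ j ∈ Finset.Ioc (0:ℤ) (R-1), g (R - j) :=
          Finset.sum_add_distrib
      _ = 2 * ∑ j ∈ Finset.Ioc (0:ℤ) (R-1), g j := by rw [hrefl]; ring
  have hdecomp : ∑ j ∈ Finset.Ioc (0:ℤ) (R-1), g j
      = (∑ j ∈ Finset.Ioc (0:ℤ) m1, g j) + (∑ j ∈ Finset.Ioc m1 m2, g j)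
        + ∑ j ∈ Finset.Ioc m2 (R-1), g j := by
    have hu1 : Finset.Ioc (0:ℤ) m1 ∪ Finset.Ioc m1 m2 = Finset.Ioc 0 m2 :=
      Finset.Ioc_union_Ioc_eq_Ioc (by omega) hm12
    have hu2 : Finset.Ioc (0:ℤ) m2 ∪ Finset.Ioc m2 (R-1) = Finset.Ioc 0 (R-1) :=
      Finset.Ioc_union_Ioc_eq_Ioc (by omega) hm2R
    have hd1 : Disjoint (Finset.Ioc (0:ℤ) m1) (Finset.Ioc m1 m2) := by
      rw [Finset.disjoint_left]
      intro x hx hx'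
      simp only [Finset.mem_Ioc] at hx hx'
      omega
    have hd2 : Disjoint (Finset.Ioc (0:ℤ) m2) (Finset.Ioc m2 (R-1)) := by
      rw [Finset.disjoint_left]
      intro x hx hx'
      simp only [Finset.mem_Ioc] at hx hx'
      omega
    rw [← hu2, Finset.sum_union hd2, ← hu1, Finset.sum_union hd1]
  have hp1 : ∑ j ∈ Finset.Ioc (0:ℤ) m1, g j ≤ (m1:ℝ) * (P:ℝ) := by
    calc ∑ j ∈ Finset.Ioc (0:ℤ) m1, g j ≤ ∑ _j ∈ Finset.Ioc (0:ℤ) m1, (P:ℝ) :=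
          Finset.sum_le_sum (fun j _ => min_le_left _ _)
      _ = ((Finset.Ioc (0:ℤ) m1).card : ℝ) * (P:ℝ) := by rw [Finset.sum_const, nsmul_eq_mul]
      _ = (m1:ℝ) * (P:ℝ) := by
          rw [Int.card_Ioc]
          congr 1
          have : ((m1 - 0).toNat : ℤ) = m1 := by rw [Int.toNat_of_nonneg (by omega)]; ring
          exact_mod_cast congrArg (Int.cast : ℤ → ℝ) this
  have hp2 : ∑ j ∈ Finset.Ioc m1 m2, g j ≤ ((R:ℝ)/2) * (Real.log (m2:ℝ) - Real.log (m1:ℝ)) := by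
    calc ∑ j ∈ Finset.Ioc m1 m2, g j ≤ ∑ j ∈ Finset.Ioc m1 m2, ((R:ℝ)/2) * (1/(j:ℝ)) := by
          refine Finset.sum_le_sum (fun j hj => ?_)
          refine le_trans (min_le_right _ _) (le_trans (min_le_left _ _) (le_of_eq (by ring)))
      _ = ((R:ℝ)/2) * ∑ j ∈ Finset.Ioc m1 m2, (1/(j:ℝ)) := by rw [Finset.mul_sum]
      _ ≤ ((R:ℝ)/2) * (Real.log (m2:ℝ) - Real.log (m1:ℝ)) := by
          refine mul_le_mul_of_nonneg_left ?_ (by linarith)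
          exact KernelAux.harm_sum hm1pos m2 hm12
  have hp3 : ∑ j ∈ Finset.Ioc m2 (R-1), g j ≤ (R:ℝ)/2 := by
    have hstep : ∑ j ∈ Finset.Ioc m2 (R-1), g j
        ≤ ((R:ℝ)^2/(4*(c:ℝ))) * (1/(m2:ℝ) - 1/((R-1:ℤ):ℝ)) := by
      calc ∑ j ∈ Finset.Ioc m2 (R-1), g j
          ≤ ∑ j ∈ Finset.Ioc m2 (R-1), ((R:ℝ)^2/(4*(c:ℝ))) * (1/(j:ℝ)^2) := by
            refine Finset.sum_le_sum (fun j hj => ?_)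
            refine le_trans (min_le_right _ _) (le_trans (min_le_right _ _) (le_of_eq ?_))
            field_simp
        _ = ((R:ℝ)^2/(4*(c:ℝ))) * ∑ j ∈ Finset.Ioc m2 (R-1), (1/(j:ℝ)^2) := by
            rw [Finset.mul_sum]
        _ ≤ ((R:ℝ)^2/(4*(c:ℝ))) * (1/(m2:ℝ) - 1/((R-1:ℤ):ℝ)) := by
            refine mul_le_mul_of_nonneg_left ?_ (by positivity)
            exact KernelAux.sq_sum (le_trans hm1pos hm12) (R-1) hm2R
    have hRm1 : (0:ℝ) < ((R-1:ℤ):ℝ) := by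
      have : ((R-1:ℤ):ℝ) = (R:ℝ) - 1 := by push_cast; ring
      rw [this]; linarith
    have hinv : 1/(m2:ℝ) ≤ 2*(c:ℝ)/(R:ℝ) := by
      have hpos : (0:ℝ) < (R:ℝ)/(2*(c:ℝ)) := by positivity
      have h := one_div_le_one_div_of_le hpos hm2l
      rwa [one_div_div] at h
    have hfin : ((R:ℝ)^2/(4*(c:ℝ))) * (2*(c:ℝ)/(R:ℝ)) = (R:ℝ)/2 := by
      field_simp
      ring
    calc ∑ j ∈ Finset.Ioc m2 (R-1), g j
        ≤ ((R:ℝ)^2/(4*(c:ℝ))) * (1/(m2:ℝ) - 1/((R-1:ℤ):ℝ)) := hstep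
      _ ≤ ((R:ℝ)^2/(4*(c:ℝ))) * (2*(c:ℝ)/(R:ℝ)) := by
          refine mul_le_mul_of_nonneg_left ?_ (by positivity)
          have : 0 ≤ 1/((R-1:ℤ):ℝ) := by positivity
          linarith
      _ = (R:ℝ)/2 := hfin
  -- the logarithm bound
  have hNM1 : (M:ℝ) + 1 ≤ (N:ℝ) := by exact_mod_cast (by omega : M + 1 ≤ N)
  have hM2 : (2:ℝ) ≤ (M:ℝ) := by exact_mod_cast hM
  have hMpos : (0:ℝ) < (M:ℝ) := by linarith
  have hLnn : 0 ≤ Real.log (1 + (N:ℝ)/(M:ℝ)) := by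
    refine Real.log_nonneg ?_
    have : 0 ≤ (N:ℝ)/(M:ℝ) := div_nonneg (by linarith) (by linarith)
    linarith
  have hXpos : (0:ℝ) < (P:ℝ)/(c:ℝ) + 1 := by
    have := div_pos hppos hccpos
    linarith
  have hμprod : (m2:ℝ) ≤ (m1:ℝ) * ((P:ℝ)/(c:ℝ) + 1) := by
    have h1 : ((R:ℝ)/(2*(P:ℝ))) * ((P:ℝ)/(c:ℝ)) ≤ (m1:ℝ) * ((P:ℝ)/(c:ℝ)) :=
      mul_le_mul_of_nonneg_right hm1l (by positivity)
    have h2 : ((R:ℝ)/(2*(P:ℝ))) * ((P:ℝ)/(c:ℝ)) = (R:ℝ)/(2*(c:ℝ)) := by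
      field_simp
    nlinarith [hm2u, hμ1pos]
  have hlog2 : Real.log (m2:ℝ) - Real.log (m1:ℝ) ≤ Real.log ((P:ℝ)/(c:ℝ) + 1) := by
    have h1 : Real.log (m2:ℝ) ≤ Real.log ((m1:ℝ) * ((P:ℝ)/(c:ℝ) + 1)) :=
      Real.log_le_log (by linarith) hμprod
    rw [Real.log_mul (by linarith) (by linarith)] at h1
    linarith
  have hX : (P:ℝ)/(c:ℝ) + 1 ≤ (5/2) * (1 + (N:ℝ)/(M:ℝ)) := by
    have hP' : (P:ℝ) = 2*((N:ℝ)+(M:ℝ))+1 := by rw [hPdef]; push_cast; ring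
    have hc' : (c:ℝ) = 2*(M:ℝ)-1 := by rw [hcdef]; push_cast; ring
    rw [show (1:ℝ) + (N:ℝ)/(M:ℝ) = ((M:ℝ)+(N:ℝ))/(M:ℝ) by field_simp,
      show (P:ℝ)/(c:ℝ) + 1 = ((P:ℝ)+(c:ℝ))/(c:ℝ) by field_simp,
      show (5/2:ℝ) * (((M:ℝ)+(N:ℝ))/(M:ℝ)) = (5*((M:ℝ)+(N:ℝ)))/(2*(M:ℝ)) by ring,
      div_le_div_iff₀ hccpos (by positivity)]
    rw [hP', hc']
    nlinarith [hNM1, hM2]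
  have hlogX : Real.log ((P:ℝ)/(c:ℝ) + 1) ≤ 1 + Real.log (1 + (N:ℝ)/(M:ℝ)) := by
    have h52 : (5/2:ℝ) ≤ Real.exp 1 := by
      have := Real.exp_one_gt_d9
      linarith
    have hyp : (0:ℝ) < 1 + (N:ℝ)/(M:ℝ) := by
      have : 0 ≤ (N:ℝ)/(M:ℝ) := div_nonneg (by linarith) (by linarith)
      linarith
    have h1 : (P:ℝ)/(c:ℝ) + 1 ≤ Real.exp 1 * (1 + (N:ℝ)/(M:ℝ)) := by
      have := mul_le_mul_of_nonneg_right h52 (le_of_lt hyp)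
      linarith [hX]
    have h2 : Real.log ((P:ℝ)/(c:ℝ) + 1) ≤ Real.log (Real.exp 1 * (1 + (N:ℝ)/(M:ℝ))) :=
      Real.log_le_log hXpos h1
    rw [Real.log_mul (Real.exp_pos 1).ne' (ne_of_gt hyp), Real.log_exp] at h2
    exact h2
  -- final assembly
  have hp1' : (m1:ℝ) * (P:ℝ) ≤ (R:ℝ)/2 + (P:ℝ) := by
    have h1 : ((R:ℝ)/(2*(P:ℝ)) + 1) * (P:ℝ) = (R:ℝ)/2 + (P:ℝ) := by
      field_simp
    nlinarith [hm1u, hppos]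
  have hp2' : ((R:ℝ)/2) * (Real.log (m2:ℝ) - Real.log (m1:ℝ))
      ≤ ((R:ℝ)/2) * (1 + Real.log (1 + (N:ℝ)/(M:ℝ))) := by
    refine mul_le_mul_of_nonneg_left ?_ (by positivity)
    linarith [hlog2, hlogX]
  have hStotal : ∑ j ∈ Finset.Icc (1:ℤ) R, F j ≤ (R:ℝ) * (6 + Real.log (1 + (N:ℝ)/(M:ℝ))) := by
    rw [hsplitR]
    have hsum2 : ∑ j ∈ Finset.Ioc (0:ℤ) (R-1), g j
        ≤ ((R:ℝ)/2 + (P:ℝ)) + ((R:ℝ)/2) * (1 + Real.log (1 + (N:ℝ)/(M:ℝ))) + (R:ℝ)/2 := by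
      rw [hdecomp]
      have := le_trans hp2 hp2'
      linarith [hp1, hp3, le_trans hp1 hp1']
    have hFR := B1 R
    have h2s := le_trans hsum1 (by linarith : 2 * ∑ j ∈ Finset.Ioc (0:ℤ) (R-1), g j
        ≤ 2 * (((R:ℝ)/2 + (P:ℝ)) + ((R:ℝ)/2) * (1 + Real.log (1 + (N:ℝ)/(M:ℝ))) + (R:ℝ)/2))
    nlinarith [hLnn, hppR]
  have hfinal : (1 / (R : ℝ)) * ∑ j ∈ Finset.Icc (1:ℤ) R, F j
      ≤ 6 + Real.log (1 + (N:ℝ)/(M:ℝ)) := by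
    have h1 : (1 / (R : ℝ)) * ∑ j ∈ Finset.Icc (1:ℤ) R, F j
        ≤ (1 / (R : ℝ)) * ((R:ℝ) * (6 + Real.log (1 + (N:ℝ)/(M:ℝ)))) :=
      mul_le_mul_of_nonneg_left hStotal (by positivity)
    have h2 : (1 / (R : ℝ)) * ((R:ℝ) * (6 + Real.log (1 + (N:ℝ)/(M:ℝ))))
        = 6 + Real.log (1 + (N:ℝ)/(M:ℝ)) := by
      field_simp
    linarith
  refine le_trans hfinal ?_
  nlinarith [Real.pi_gt_three, hLnn,
    mul_nonneg (by linarith [Real.pi_gt_three] : (0:ℝ) ≤ Real.pi - 3)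
      (by linarith : (0:ℝ) ≤ 2 + Real.log (1 + (N:ℝ)/(M:ℝ)))]
end

section
/- Let M and N be integers with 2 ≤ M < N. Then (1/M^2) ∫_{1/(N+M)}^{1/M} (sin(πMt))^2 / |sin(πt)|^3 dt ≤ 2 log(1 + N/M). -/
open MeasureTheory

/-- The middle-range estimate `I_2`: for integers `2 ≤ M < N`,
`(1/M^2) ∫_{1/(N+M)}^{1/M} (sin(πMt))^2 / |sin(πt)|^3 dt ≤ 2 log(1 + N/M)`. -/
theorem middle_range_bound
    (M N : ℤ) (hM : 2 ≤ M) (hMN : M < N) :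
    (1 / (M : ℝ) ^ 2) *
        ∫ t in (1 / ((N : ℝ) + (M : ℝ)))..(1 / (M : ℝ)),
          (Real.sin (Real.pi * (M : ℝ) * t)) ^ 2 / |Real.sin (Real.pi * t)| ^ 3 ≤
      2 * Real.log (1 + (N : ℝ) / (M : ℝ)) := by
  have hMR : (2 : ℝ) ≤ (M : ℝ) := by exact_mod_cast hM
  have hNR : (M : ℝ) < (N : ℝ) := by exact_mod_cast hMN
  have hMpos : (0 : ℝ) < M := by linarith
  set a : ℝ := 1 / ((N : ℝ) + (M : ℝ)) with ha
  set b : ℝ := 1 / (M : ℝ) with hb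
  have hNMpos : (0 : ℝ) < (N : ℝ) + (M : ℝ) := by linarith
  have hapos : 0 < a := by positivity
  have hbpos : 0 < b := by positivity
  have hab : a ≤ b := by
    apply one_div_le_one_div_of_le hMpos; linarith
  have hbhalf : b ≤ 1 / 2 := by
    apply one_div_le_one_div_of_le (by norm_num) hMR
  -- pointwise bound on [a, b]
  have key : ∀ t ∈ Set.Icc a b,
      (Real.sin (Real.pi * (M : ℝ) * t)) ^ 2 / |Real.sin (Real.pi * t)| ^ 3
        ≤ Real.pi ^ 2 * (M : ℝ) ^ 2 / 8 * (1 / t) := by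
    intro t ht
    obtain ⟨ht1, ht2⟩ := ht
    have htpos : 0 < t := lt_of_lt_of_le hapos ht1
    have hthalf : t ≤ 1 / 2 := ht2.trans hbhalf
    have hsin_lb : 2 * t ≤ Real.sin (Real.pi * t) := by
      have := Real.mul_le_sin (x := Real.pi * t) (by positivity)
        (by nlinarith [Real.pi_pos])
      calc 2 * t = 2 / Real.pi * (Real.pi * t) := by
            field_simp
        _ ≤ Real.sin (Real.pi * t) := this
    have h2t : 0 < 2 * t := by linarith
    have habs : 2 * t ≤ |Real.sin (Real.pi * t)| :=
      hsin_lb.trans (le_abs_self _)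
    have hcube : (2 * t) ^ 3 ≤ |Real.sin (Real.pi * t)| ^ 3 := by
      gcongr
    have hnum : (Real.sin (Real.pi * (M : ℝ) * t)) ^ 2 ≤ (Real.pi * (M : ℝ) * t) ^ 2 :=
      Real.sin_sq_le_sq
    have hc3 : (0 : ℝ) < (2 * t) ^ 3 := by positivity
    calc (Real.sin (Real.pi * (M : ℝ) * t)) ^ 2 / |Real.sin (Real.pi * t)| ^ 3
        ≤ (Real.pi * (M : ℝ) * t) ^ 2 / (2 * t) ^ 3 := by
          apply div_le_div₀ (by positivity) hnum hc3 hcube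
      _ = Real.pi ^ 2 * (M : ℝ) ^ 2 / 8 * (1 / t) := by
          field_simp; ring
  -- integrability
  have hcontf : ContinuousOn
      (fun t => (Real.sin (Real.pi * (M : ℝ) * t)) ^ 2 / |Real.sin (Real.pi * t)| ^ 3)
      (Set.uIcc a b) := by
    rw [Set.uIcc_of_le hab]
    apply ContinuousOn.div
    · fun_prop
    · fun_prop
    · intro t ht
      obtain ⟨ht1, ht2⟩ := ht
      have htpos : 0 < t := lt_of_lt_of_le hapos ht1
      have : 0 < Real.sin (Real.pi * t) := by
        apply Real.sin_pos_of_pos_of_lt_pi (by positivity)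
        have : t ≤ 1 / 2 := ht2.trans hbhalf
        nlinarith [Real.pi_gt_three]
      positivity
  have hintf : IntervalIntegrable (fun t : ℝ => (Real.sin (Real.pi * (M : ℝ) * t)) ^ 2 / |Real.sin (Real.pi * t)| ^ 3) volume a b := hcontf.intervalIntegrable
  have hintg : IntervalIntegrable (fun t : ℝ => Real.pi ^ 2 * (M : ℝ) ^ 2 / 8 * (1 / t))
      volume a b := by
    apply ContinuousOn.intervalIntegrable
    apply ContinuousOn.mul continuousOn_const
    apply ContinuousOn.div continuousOn_const continuousOn_id
    rw [Set.uIcc_of_le hab]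
    intro t ht
    exact ne_of_gt (lt_of_lt_of_le hapos ht.1)
  have hmono := intervalIntegral.integral_mono_on hab hintf hintg key
  have hgval : (∫ t in a..b, Real.pi ^ 2 * (M : ℝ) ^ 2 / 8 * (1 / t))
      = Real.pi ^ 2 * (M : ℝ) ^ 2 / 8 * Real.log (b / a) := by
    rw [intervalIntegral.integral_const_mul, integral_one_div_of_pos hapos hbpos]
  have hlogeq : Real.log (b / a) = Real.log (1 + (N : ℝ) / (M : ℝ)) := by
    congr 1
    rw [ha, hb]
    field_simp
    ring
  have hlognn : 0 ≤ Real.log (1 + (N : ℝ) / (M : ℝ)) := by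
    apply Real.log_nonneg
    have : 0 ≤ (N : ℝ) / (M : ℝ) := div_nonneg (by linarith) (by linarith)
    linarith
  have hpi : Real.pi ^ 2 ≤ 16 := by nlinarith [Real.pi_lt_d2, Real.pi_pos]
  calc (1 / (M : ℝ) ^ 2) * ∫ t in a..b,
          (Real.sin (Real.pi * (M : ℝ) * t)) ^ 2 / |Real.sin (Real.pi * t)| ^ 3
      ≤ (1 / (M : ℝ) ^ 2) * (Real.pi ^ 2 * (M : ℝ) ^ 2 / 8 * Real.log (1 + (N : ℝ) / (M : ℝ))) := by
        rw [← hlogeq, ← hgval]; gcongr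
    _ = Real.pi ^ 2 / 8 * Real.log (1 + (N : ℝ) / (M : ℝ)) := by
        field_simp
    _ ≤ 2 * Real.log (1 + (N : ℝ) / (M : ℝ)) := by nlinarith
end

section
/- Let I be a finite set of integers with |I| ≥ 8. Then there exist a positive integer q and an integer s such that |I|^{1/3}/8 ≤ |I(q;s)| ≤ q^{1/2}. -/
/-- Lemma 3.6 (good modulus): if `I` is a finite set of integers with `|I| ≥ 8`, then there
are a positive integer `q` and an integer `s` such that
`|I|^{1/3}/8 ≤ |I(q;s)| ≤ q^{1/2}`, where `I(q;s) = {k ∈ I : k ≡ s (mod q)}`. -/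
theorem good_modulus (I : Finset ℤ) (hI : 8 ≤ I.card) :
    ∃ (q : ℕ) (s : ℤ), 0 < q ∧
      (I.card : ℝ) ^ ((1 : ℝ) / 3) / 8 ≤
        ((I.filter (fun k => k ≡ s [ZMOD (q : ℤ)])).card : ℝ) ∧
      ((I.filter (fun k => k ≡ s [ZMOD (q : ℤ)])).card : ℝ) ≤ (q : ℝ) ^ ((1 : ℝ) / 2) := by
  classical
  set n := I.card with hn
  have hIne : I.Nonempty := Finset.card_pos.mp (by omega)
  set g : ℕ → ℤ → ℕ := fun q s => (I.filter (fun k => k ≡ s [ZMOD (q : ℤ)])).card with hg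
  set f : ℕ → ℕ := fun q => I.sup (g q) with hf
  -- g is bounded by f for every s (not just s ∈ I)
  have hgle : ∀ q : ℕ, ∀ s : ℤ, g q s ≤ f q := by
    intro q s
    by_cases h : (I.filter (fun k => k ≡ s [ZMOD (q : ℤ)])).Nonempty
    · obtain ⟨x, hx⟩ := h
      simp only [Finset.mem_filter] at hx
      have he : g q s = g q x := by
        show (I.filter (fun k => k ≡ s [ZMOD (q : ℤ)])).card =
          (I.filter (fun k => k ≡ x [ZMOD (q : ℤ)])).card
        congr 1
        apply Finset.filter_congr
        intro k _
        exact ⟨fun hk => hk.trans hx.2.symm, fun hk => hk.trans hx.2⟩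
      rw [he]
      exact Finset.le_sup hx.1
    · rw [Finset.not_nonempty_iff_eq_empty] at h
      simp only [hg, h, Finset.card_empty]
      exact Nat.zero_le _
  -- pigeonhole
  have hpig : ∀ q : ℕ, 0 < q → n ≤ q * f q := by
    intro q hq
    have hq' : (0 : ℤ) < (q : ℤ) := by exact_mod_cast hq
    have hcard : n = ∑ s ∈ Finset.Ico (0 : ℤ) (q : ℤ),
        (I.filter (fun k => k % (q : ℤ) = s)).card := by
      rw [hn]
      apply Finset.card_eq_sum_card_fiberwise
      intro x _
      exact Finset.mem_Ico.mpr ⟨Int.emod_nonneg x hq'.ne', Int.emod_lt_of_pos x hq'⟩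
    rw [hcard]
    calc ∑ s ∈ Finset.Ico (0 : ℤ) (q : ℤ), (I.filter (fun k => k % (q : ℤ) = s)).card
        ≤ ∑ _s ∈ Finset.Ico (0 : ℤ) (q : ℤ), f q := by
          apply Finset.sum_le_sum
          intro s _
          by_cases h : (I.filter (fun k => k % (q : ℤ) = s)).Nonempty
          · obtain ⟨x, hx⟩ := h
            simp only [Finset.mem_filter] at hx
            have he : (I.filter (fun k => k % (q : ℤ) = s)).card = g q x := by
              show _ = (I.filter (fun k => k ≡ x [ZMOD (q : ℤ)])).card
              congr 1
              apply Finset.filter_congr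
              intro k _
              constructor
              · intro hk
                show k % (q : ℤ) = x % (q : ℤ)
                rw [hk, hx.2]
              · intro hk
                have h2 : k % (q : ℤ) = x % (q : ℤ) := hk
                rw [h2, hx.2]
            rw [he]
            exact hgle q x
          · rw [Finset.not_nonempty_iff_eq_empty] at h
            rw [h]
            simp
      _ = q * f q := by
          rw [Finset.sum_const, Int.card_Ico]
          simp [smul_eq_mul]
  -- doubling
  have hdbl : ∀ q : ℕ, f q ≤ 2 * f (2 * q) := by
    intro q
    obtain ⟨s₀, hs₀I, hs₀⟩ := Finset.exists_mem_eq_sup I hIne (g q)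
    have hsub : I.filter (fun k => k ≡ s₀ [ZMOD (q : ℤ)]) ⊆
        (I.filter (fun k => k ≡ s₀ [ZMOD ((2 * q : ℕ) : ℤ)])) ∪
        (I.filter (fun k => k ≡ s₀ + q [ZMOD ((2 * q : ℕ) : ℤ)])) := by
      intro x hx
      simp only [Finset.mem_filter, Finset.mem_union] at hx ⊢
      obtain ⟨hxI, hxm⟩ := hx
      obtain ⟨m, hm⟩ := Int.modEq_iff_dvd.mp hxm
      rcases Int.even_or_odd m with ⟨t, ht⟩ | ⟨t, ht⟩
      · left
        refine ⟨hxI, Int.modEq_iff_dvd.mpr ⟨t, ?_⟩⟩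
        push_cast
        rw [ht] at hm
        linarith
      · right
        refine ⟨hxI, Int.modEq_iff_dvd.mpr ⟨t + 1, ?_⟩⟩
        push_cast
        rw [ht] at hm
        linarith
    calc f q = g q s₀ := hs₀
      _ ≤ ((I.filter (fun k => k ≡ s₀ [ZMOD ((2 * q : ℕ) : ℤ)])) ∪
            (I.filter (fun k => k ≡ s₀ + q [ZMOD ((2 * q : ℕ) : ℤ)]))).card :=
          Finset.card_le_card hsub
      _ ≤ g (2 * q) s₀ + g (2 * q) (s₀ + q) := Finset.card_union_le _ _
      _ ≤ f (2 * q) + f (2 * q) := Nat.add_le_add (hgle _ _) (hgle _ _)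
      _ = 2 * f (2 * q) := (two_mul _).symm
  -- f 1 = n
  have hf1 : f 1 = n := by
    apply le_antisymm
    · apply Finset.sup_le
      intro s _
      exact Finset.card_filter_le _ _
    · obtain ⟨x, hx⟩ := hIne
      have : g 1 x = n := by
        simp only [hg, hn]
        congr 1
        apply Finset.filter_true_of_mem
        intro k _
        exact Int.modEq_one
      rw [← this]
      exact Finset.le_sup hx
  -- eventually f (2^j) ≤ 1
  have hev : ∃ j : ℕ, f (2 ^ j) ^ 2 ≤ 2 ^ j := by
    set M := I.sup (fun k => k.natAbs) with hM
    refine ⟨2 * M + 1, ?_⟩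
    have hM2 : 2 * M < 2 ^ (2 * M + 1) :=
      lt_of_le_of_lt (Nat.le_of_lt (Nat.lt_succ_self _)) Nat.lt_two_pow_self
    have hfle : f (2 ^ (2 * M + 1)) ≤ 1 := by
      apply Finset.sup_le
      intro s _
      apply Finset.card_le_one.mpr
      intro a ha b hb
      simp only [Finset.mem_filter] at ha hb
      have hab : a ≡ b [ZMOD ((2 ^ (2 * M + 1) : ℕ) : ℤ)] := ha.2.trans hb.2.symm
      obtain ⟨t, ht⟩ := Int.modEq_iff_dvd.mp hab
      push_cast at ht
      have haM : a.natAbs ≤ M := Finset.le_sup ha.1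
      have hbM : b.natAbs ≤ M := Finset.le_sup hb.1
      have ha' : |a| ≤ (M : ℤ) := by rw [Int.abs_eq_natAbs]; exact_mod_cast haM
      have hb' : |b| ≤ (M : ℤ) := by rw [Int.abs_eq_natAbs]; exact_mod_cast hbM
      obtain ⟨ha1, ha2⟩ := abs_le.mp ha'
      obtain ⟨hb1, hb2⟩ := abs_le.mp hb'
      have habs : |b - a| ≤ 2 * (M : ℤ) := abs_le.mpr ⟨by linarith, by linarith⟩
      have hN : (2 * (M : ℤ)) < (2 : ℤ) ^ (2 * M + 1) := by exact_mod_cast hM2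
      have ht0 : t = 0 := by
        by_contra h
        have h1 : (2 : ℤ) ^ (2 * M + 1) ≤ |b - a| := by
          rw [ht]
          calc (2 : ℤ) ^ (2 * M + 1) = (2 : ℤ) ^ (2 * M + 1) * 1 := by ring
            _ ≤ (2 : ℤ) ^ (2 * M + 1) * |t| := by
                apply mul_le_mul_of_nonneg_left _ (by positivity)
                exact Int.one_le_abs (by exact_mod_cast h)
            _ = |(2 : ℤ) ^ (2 * M + 1) * t| := by
                rw [abs_mul, abs_of_nonneg (by positivity : (0:ℤ) ≤ (2:ℤ) ^ (2 * M + 1))]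
        linarith
      rw [ht0] at ht
      have : b - a = 0 := by linarith
      linarith
    calc f (2 ^ (2 * M + 1)) ^ 2 ≤ 1 ^ 2 := Nat.pow_le_pow_left hfle 2
      _ ≤ 2 ^ (2 * M + 1) := Nat.one_le_two_pow
  -- minimal j
  set j := Nat.find hev with hj
  have hjspec : f (2 ^ j) ^ 2 ≤ 2 ^ j := Nat.find_spec hev
  have hj0 : j ≠ 0 := by
    intro h
    rw [h] at hjspec
    simp only [pow_zero, hf1] at hjspec
    nlinarith [hjspec]
  have hjprev : ¬ (f (2 ^ (j - 1)) ^ 2 ≤ 2 ^ (j - 1)) :=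
    Nat.find_min hev (Nat.sub_lt (Nat.pos_of_ne_zero hj0) one_pos)
  push_neg at hjprev
  set m := f (2 ^ j) with hm
  have hpow : 2 ^ j = 2 * 2 ^ (j - 1) := by
    rw [← pow_succ']
    congr 1
    omega
  have hdj : f (2 ^ (j - 1)) ≤ 2 * m := by
    rw [hm, hpow]
    exact hdbl _
  have hq8 : 2 ^ j < 8 * m ^ 2 := by
    have h1 : 2 ^ (j - 1) < (2 * m) ^ 2 := lt_of_lt_of_le hjprev (Nat.pow_le_pow_left hdj 2)
    rw [hpow]
    nlinarith
  have hn8 : n < 8 * m ^ 3 := by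
    have h1 : n ≤ 2 ^ j * m := hpig _ (pow_pos two_pos j)
    have hm1 : 1 ≤ m := by
      by_contra h
      push_neg at h
      interval_cases m; omega
    nlinarith
  -- choose the witness s₀
  obtain ⟨s₀, hs₀I, hs₀⟩ := Finset.exists_mem_eq_sup I hIne (g (2 ^ j))
  refine ⟨2 ^ j, s₀, pow_pos two_pos j, ?_, ?_⟩
  · -- lower bound
    have hc : (I.filter (fun k => k ≡ s₀ [ZMOD ((2 ^ j : ℕ) : ℤ)])).card = m := hs₀.symm
    rw [hc]
    have h1 : (n : ℝ) ≤ ((2 * m : ℕ) : ℝ) ^ (3 : ℕ) := by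
      push_cast
      have : (n : ℝ) < 8 * (m : ℝ) ^ 3 := by exact_mod_cast hn8
      nlinarith
    have h2 : (n : ℝ) ^ ((1 : ℝ) / 3) ≤ (((2 * m : ℕ) : ℝ) ^ (3 : ℕ)) ^ ((1 : ℝ) / 3) :=
      Real.rpow_le_rpow (Nat.cast_nonneg n) h1 (by norm_num)
    have h3 : (((2 * m : ℕ) : ℝ) ^ (3 : ℕ)) ^ ((1 : ℝ) / 3) = ((2 * m : ℕ) : ℝ) := by
      rw [← Real.rpow_natCast ((2 * m : ℕ) : ℝ) 3, ← Real.rpow_mul (Nat.cast_nonneg _)]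
      norm_num
    rw [h3] at h2
    push_cast at h2 ⊢
    linarith
  · -- upper bound
    have hc : (I.filter (fun k => k ≡ s₀ [ZMOD ((2 ^ j : ℕ) : ℤ)])).card = m := hs₀.symm
    rw [hc]
    have h1 : ((m : ℝ) ^ (2 : ℕ)) ≤ ((2 ^ j : ℕ) : ℝ) := by exact_mod_cast hjspec
    have h2 : ((m : ℝ) ^ (2 : ℕ)) ^ ((1 : ℝ) / 2) ≤ (((2 ^ j : ℕ) : ℝ)) ^ ((1 : ℝ) / 2) :=
      Real.rpow_le_rpow (by positivity) h1 (by norm_num)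
    have h3 : ((m : ℝ) ^ (2 : ℕ)) ^ ((1 : ℝ) / 2) = (m : ℝ) := by
      rw [← Real.rpow_natCast (m : ℝ) 2, ← Real.rpow_mul (Nat.cast_nonneg _)]
      norm_num
    rw [h3] at h2
    exact h2
end

section
/- Let d_1, d_2, q be positive integers and let I(q;s) = {k_1 < ... < k_J} be a finite set of integers. For each j let f_{k_j} be a trigonometric polynomial of degree at most d_1 and let b_{k_j} be integers defined by k_j = b_{k_j} q + s. Then T_2 := (1/(q d_2)) ∑_{m=1}^{q d_2} ∫_{m−1}^{m} |∑_{j=1}^J (f_{k_j}(u/(q d_2)) − f_{k_j}((m−1)/(q d_2))) e(b_{k_j} u)| du ≤ (2π d_1/(q d_2)) ∑_{j=1}^J ‖f_{k_j}‖_{L^1([0,1])}. -/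
open MeasureTheory

namespace ErrorTermAux

open Finset Complex

lemma e_def' (x : ℝ) : e x = Complex.exp ((2 * Real.pi * x : ℝ) * Complex.I) := by
  unfold e; congr 1; push_cast; ring

lemma e_add (x y : ℝ) : e (x + y) = e x * e y := by
  unfold e
  rw [← Complex.exp_add]
  congr 1
  push_cast; ring

lemma e_zero : e 0 = 1 := by simp [e]

lemma e_norm (x : ℝ) : ‖e x‖ = 1 := by
  rw [e_def', Complex.norm_exp]
  simp

lemma e_ne_zero (x : ℝ) : e x ≠ 0 := Complex.exp_ne_zero _

lemma e_int (n : ℤ) : e n = 1 := by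
  unfold e
  rw [show 2 * (Real.pi:ℂ) * Complex.I * (n:ℝ) = (n:ℤ) * (2 * Real.pi * Complex.I) by push_cast; ring]
  exact Complex.exp_int_mul_two_pi_mul_I n

lemma e_eq_one_iff (x : ℝ) : e x = 1 ↔ ∃ n : ℤ, x = n := by
  constructor
  · intro h
    unfold e at h
    rw [Complex.exp_eq_one_iff] at h
    obtain ⟨n, hn⟩ := h
    refine ⟨n, ?_⟩
    have hpi : (2 * Real.pi * Complex.I : ℂ) ≠ 0 := by
      simp [Real.pi_ne_zero, Complex.I_ne_zero]
    have h2 : (x:ℂ) * (2 * Real.pi * Complex.I) = (n:ℂ) * (2 * Real.pi * Complex.I) := by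
      linear_combination hn
    have : (x:ℂ) = n := mul_right_cancel₀ hpi h2
    exact_mod_cast this
  · rintro ⟨n, rfl⟩; exact e_int n

lemma e_nat_mul (k : ℕ) (y : ℝ) : e (k * y) = (e y) ^ k := by
  unfold e
  rw [show 2 * (Real.pi:ℂ) * Complex.I * ((k:ℕ) * y : ℝ) = (k:ℕ) * (2 * Real.pi * Complex.I * y) by push_cast; ring]
  exact Complex.exp_nat_mul _ k

lemma e_half : e (1/2 : ℝ) = -1 := by
  unfold e
  rw [show 2 * (Real.pi:ℂ) * Complex.I * ((1/2 : ℝ):ℂ) = Real.pi * Complex.I by push_cast; ring]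
  exact Complex.exp_pi_mul_I

lemma e_quarter : e (1/4 : ℝ) = Complex.I := by
  unfold e
  rw [show 2 * (Real.pi:ℂ) * Complex.I * ((1/4 : ℝ):ℂ) = (Real.pi/2 : ℝ) * Complex.I by push_cast; ring]
  rw [Complex.exp_mul_I]
  simp

lemma e_sub_e_neg (y : ℝ) : e y - e (-y) = 2 * Complex.I * (Real.sin (2 * Real.pi * y) : ℂ) := by
  rw [e_def', e_def', Complex.ofReal_sin]
  rw [show ((2 * Real.pi * -y : ℝ) : ℂ) * Complex.I = -(((2 * Real.pi * y : ℝ):ℂ) * Complex.I) by push_cast; ring]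
  rw [Complex.sin]
  push_cast
  ring_nf
  rw [Complex.I_sq]
  ring

/-- the nodes of the Riesz interpolation formula -/
noncomputable def τ (d k : ℕ) : ℝ := (2*(k:ℝ) - 1)/(4*(d:ℝ))

/-- the coefficients of the Riesz interpolation formula -/
noncomputable def rc (d k : ℕ) : ℂ :=
  ((Real.pi : ℂ) * Complex.I / (d:ℂ)) *
    ∑ n ∈ Finset.Icc (1 - (d:ℤ)) (d:ℤ), (n:ℂ) * e (-((n:ℝ) * τ d k))

end ErrorTermAux
namespace ErrorTermAux
open Finset Complex

variable {d : ℕ}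

lemma sum_Icc_shift {M : Type*} [AddCommMonoid M] (F : ℕ → M) (Q : ℕ) :
    ∑ m ∈ Finset.Icc 1 Q, F m = ∑ i ∈ Finset.range Q, F (i+1) := by
  induction Q with
  | zero => simp
  | succ n ih =>
      rw [Finset.sum_Icc_succ_top (Nat.le_add_left 1 n) F, ih, Finset.sum_range_succ]

lemma sum_Icc_int_eq (F : ℤ → ℂ) (hd : 0 < d) :
    ∑ n ∈ Finset.Icc (1 - (d:ℤ)) (d:ℤ), F n
      = ∑ j ∈ Finset.range (2*d), F (1 - (d:ℤ) + j) := by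
  refine Finset.sum_nbij' (i := fun n => (n - (1 - (d:ℤ))).toNat)
    (j := fun j => 1 - (d:ℤ) + j) ?_ ?_ ?_ ?_ ?_
  · intro a ha
    simp only [Finset.mem_Icc] at ha
    simp only [Finset.mem_range]
    omega
  · intro b hb
    simp only [Finset.mem_range] at hb
    simp only [Finset.mem_Icc]
    omega
  · intro a ha
    simp only [Finset.mem_Icc] at ha
    omega
  · intro b hb
    simp only [Finset.mem_range] at hb
    omega
  · intro a ha
    simp only [Finset.mem_Icc] at ha
    congr 1
    omega

lemma tau_mul (hd : 0 < d) (r : ℤ) (k : ℕ) :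
    (r:ℝ) * τ d k = k * ((r:ℝ)/(2*d)) + (-(r:ℝ)/(4*d)) := by
  have hd' : (d:ℝ) ≠ 0 := Nat.cast_ne_zero.mpr hd.ne'
  unfold τ
  field_simp
  ring

lemma e_pow_two_d (hd : 0 < d) (r : ℤ) : (e ((r:ℝ)/(2*d)))^(2*d) = 1 := by
  have hd' : (d:ℝ) ≠ 0 := Nat.cast_ne_zero.mpr hd.ne'
  rw [← e_nat_mul]
  rw [show ((2*d : ℕ):ℝ) * ((r:ℝ)/(2*d)) = (r:ℝ) by push_cast; field_simp]
  exact e_int r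

lemma charSum (hd : 0 < d) (r : ℤ) :
    ∑ k ∈ Finset.Icc 1 (2*d), e ((r:ℝ) * τ d k)
      = if (2*(d:ℤ)) ∣ r then (2*(d:ℕ) : ℂ) * e (-(r:ℝ)/(4*(d:ℝ))) else 0 := by
  have hd' : (d:ℝ) ≠ 0 := Nat.cast_ne_zero.mpr hd.ne'
  set z : ℂ := e ((r:ℝ)/(2*d)) with hz
  have hterm : ∀ k : ℕ, e ((r:ℝ) * τ d k) = z^k * e (-(r:ℝ)/(4*d)) := by
    intro k
    rw [tau_mul hd r k, e_add, e_nat_mul]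
  simp only [hterm]
  rw [← Finset.sum_mul, sum_Icc_shift (fun k => z^k) (2*d)]
  by_cases hdvd : (2*(d:ℤ)) ∣ r
  · have hz1 : z = 1 := by
      obtain ⟨t, ht⟩ := hdvd
      rw [hz]
      rw [show (r:ℝ)/(2*d) = ((t:ℤ):ℝ) by rw [ht]; push_cast; field_simp]
      exact e_int t
    simp [hdvd, hz1]
  · have hz1 : z ≠ 1 := by
      intro h
      obtain ⟨n, hn⟩ := (e_eq_one_iff _).mp h
      apply hdvd
      refine ⟨n, ?_⟩
      have : (r:ℝ) = 2*(d:ℝ)*n := by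
        field_simp at hn
        linarith [hn]
      exact_mod_cast this
    have : ∑ i ∈ Finset.range (2*d), z^(i+1) = z * ∑ i ∈ Finset.range (2*d), z^i := by
      rw [Finset.mul_sum]
      exact Finset.sum_congr rfl fun i _ => by ring
    rw [this, geom_sum_eq hz1, e_pow_two_d hd r]
    simp [hdvd]

end ErrorTermAux
namespace ErrorTermAux
open Finset Complex

variable {d : ℕ}

lemma char_id (hd : 0 < d) (m : ℤ) (hm1 : -(d:ℤ) ≤ m) (hm2 : m ≤ (d:ℤ)) :
    ∑ k ∈ Finset.Icc 1 (2*d), rc d k * e ((m:ℝ) * τ d k)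
      = 2 * (Real.pi:ℂ) * Complex.I * (m:ℂ) := by
  have hd' : (d:ℝ) ≠ 0 := Nat.cast_ne_zero.mpr hd.ne'
  have hdc : (d:ℂ) ≠ 0 := Nat.cast_ne_zero.mpr hd.ne'
  have expand : ∀ k : ℕ,
      rc d k * e ((m:ℝ) * τ d k)
        = ((Real.pi : ℂ) * Complex.I / (d:ℂ)) *
            ∑ n ∈ Finset.Icc (1 - (d:ℤ)) (d:ℤ), (n:ℂ) * e (((m - n : ℤ):ℝ) * τ d k) := by
    intro k
    rw [rc, mul_assoc, Finset.sum_mul]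
    congr 1
    apply Finset.sum_congr rfl
    intro n _
    rw [mul_assoc, ← e_add]
    congr 2
    push_cast
    ring
  simp only [expand]
  rw [← Finset.mul_sum, Finset.sum_comm]
  have inner : ∀ n ∈ Finset.Icc (1 - (d:ℤ)) (d:ℤ),
      ∑ k ∈ Finset.Icc 1 (2*d), (n:ℂ) * e (((m - n : ℤ):ℝ) * τ d k)
        = (n:ℂ) * (if (2*(d:ℤ)) ∣ (m - n) then (2*(d:ℕ) : ℂ) * e (-((m-n:ℤ):ℝ)/(4*(d:ℝ))) else 0) := by
    intro n _
    rw [← Finset.mul_sum, charSum hd (m - n)]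
  rw [Finset.sum_congr rfl inner]
  by_cases hm' : 1 - (d:ℤ) ≤ m
  · rw [Finset.sum_eq_single m]
    · rw [if_pos (by simp)]
      simp only [sub_self]
      rw [show (-((0:ℤ):ℝ)/(4*(d:ℝ))) = 0 by norm_num, e_zero]
      field_simp
    · intro n hn hne
      rw [Finset.mem_Icc] at hn
      rw [if_neg, mul_zero]
      intro hdvd
      have habs : |m - n| < 2*(d:ℤ) := by
        rw [abs_lt]; omega
      have := Int.eq_zero_of_abs_lt_dvd hdvd habs
      omega
    · intro hmem
      exfalso
      apply hmem
      rw [Finset.mem_Icc]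
      exact ⟨hm', hm2⟩
  · have hmd : m = -(d:ℤ) := by omega
    subst hmd
    rw [Finset.sum_eq_single (d:ℤ)]
    · rw [if_pos ⟨-1, by ring⟩]
      rw [show (-((-(d:ℤ) - (d:ℤ) : ℤ):ℝ)/(4*(d:ℝ))) = (1/2 : ℝ) by push_cast; field_simp; ring]
      rw [e_half]
      push_cast
      field_simp
    · intro n hn hne
      rw [Finset.mem_Icc] at hn
      rw [if_neg, mul_zero]
      intro hdvd
      obtain ⟨t, ht⟩ := hdvd
      have h1 : -(d:ℤ) - n = 2*(d:ℤ)*t := ht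
      have ht1 : t < 0 := by nlinarith
      have ht2 : -1 ≤ t := by nlinarith
      have : t = -1 := by omega
      subst this
      omega
    · intro hmem
      exfalso
      apply hmem
      rw [Finset.mem_Icc]
      omega

lemma e_d_tau (hd : 0 < d) {k : ℕ} (hk : 1 ≤ k) :
    e ((d:ℝ) * τ d k) = (-1:ℂ)^(k+1) * Complex.I := by
  have hd' : (d:ℝ) ≠ 0 := Nat.cast_ne_zero.mpr hd.ne'
  obtain ⟨k', rfl⟩ : ∃ k', k = k'+1 := ⟨k-1, (Nat.succ_pred_eq_of_pos hk).symm⟩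
  have harg : (d:ℝ) * τ d (k'+1) = ((2*k'+1 : ℕ):ℝ) * (1/4 : ℝ) := by
    unfold τ
    push_cast
    field_simp
    ring
  rw [harg, e_nat_mul, e_quarter]
  rw [pow_add, pow_mul, Complex.I_sq, pow_one]
  rw [show k'+1+1 = k'+2 by ring, pow_add]
  ring

lemma sum_j_mul_pow (x : ℂ) (M : ℕ) :
    (x-1)^2 * ∑ j ∈ Finset.range M, (j:ℂ) * x^j
      = ((M:ℂ)-1)*x^(M+1) - (M:ℂ)*x^M + x := by
  induction M with
  | zero => simp
  | succ n ih =>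
      rw [Finset.sum_range_succ, mul_add, ih]
      push_cast
      ring

lemma rc_eq (hd : 0 < d) {k : ℕ} (hk1 : 1 ≤ k) (hk2 : k ≤ 2*d) :
    rc d k = (-1:ℂ)^(k+1) *
      ((Real.pi / (2*(d:ℝ)*(Real.sin (Real.pi * τ d k))^2) : ℝ) : ℂ) := by
  have hd' : (d:ℝ) ≠ 0 := Nat.cast_ne_zero.mpr hd.ne'
  have hdc : (d:ℂ) ≠ 0 := Nat.cast_ne_zero.mpr hd.ne'
  set w : ℂ := e (-(τ d k)) with hw
  have hwne : w ≠ 0 := e_ne_zero _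
  -- w^(2d) = -1
  have hw2d : w^(2*d) = -1 := by
    rw [hw, ← e_nat_mul]
    rw [show ((2*d:ℕ):ℝ) * (-(τ d k)) = (Int.cast (-(k:ℤ)) : ℝ) + (1/2 : ℝ) by
      unfold τ; push_cast; field_simp; ring]
    rw [e_add, e_int, one_mul, e_half]
  -- sin (π τ) positive
  have htau_pos : 0 < Real.pi * τ d k := by
    apply mul_pos Real.pi_pos
    unfold τ
    apply div_pos
    · have : (1:ℝ) ≤ (k:ℝ) := by exact_mod_cast hk1
      linarith
    · positivity
  have htau_lt : Real.pi * τ d k < Real.pi := by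
    have h1 : τ d k < 1 := by
      unfold τ
      rw [div_lt_one (by positivity)]
      have : (k:ℝ) ≤ 2*(d:ℝ) := by exact_mod_cast hk2
      linarith
    nlinarith [Real.pi_pos]
  have hsin_pos : 0 < Real.sin (Real.pi * τ d k) := Real.sin_pos_of_pos_of_lt_pi htau_pos htau_lt
  have hsinne : ((Real.sin (Real.pi * τ d k) : ℝ):ℂ) ≠ 0 := by
    exact_mod_cast Complex.ofReal_ne_zero.mpr hsin_pos.ne'
  -- closed form for the sum
  have hGval : (∑ j ∈ Finset.range (2*d), w^j) * (w-1) = -2 := by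
    rw [geom_sum_mul, hw2d]; ring
  have hTval : (w-1)^2 * (∑ j ∈ Finset.range (2*d), (j:ℂ)*w^j)
      = 2*(d:ℂ) + (2 - 2*(d:ℂ))*w := by
    have h := sum_j_mul_pow w (2*d)
    push_cast at h ⊢
    linear_combination h + (2*(d:ℂ)-1)*w*hw2d - 2*(d:ℂ)*hw2d
  have hsplit : ∑ j ∈ Finset.range (2*d), ((j:ℂ) + 1 - (d:ℂ)) * w^j
      = (∑ j ∈ Finset.range (2*d), (j:ℂ)*w^j) + (1-(d:ℂ)) * ∑ j ∈ Finset.range (2*d), w^j := by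
    rw [Finset.mul_sum, ← Finset.sum_add_distrib]
    apply Finset.sum_congr rfl
    intro j _
    ring
  -- the transformed sum
  have hFj : ∀ j : ℕ, ((1 - (d:ℤ) + j : ℤ):ℂ) * e (-(((1 - (d:ℤ) + j : ℤ):ℝ) * τ d k))
      = e (((d:ℝ)-1) * τ d k) * (((j:ℂ) + 1 - (d:ℂ)) * w^j) := by
    intro j
    have : e (-(((1 - (d:ℤ) + j : ℤ):ℝ) * τ d k))
        = e (((d:ℝ)-1) * τ d k) * w^j := by
      rw [hw, ← e_nat_mul, ← e_add]
      congr 1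
      push_cast
      ring
    rw [this]
    push_cast
    ring
  have hSw : (w - 1)^2 * (∑ n ∈ Finset.Icc (1 - (d:ℤ)) (d:ℤ), (n:ℂ) * e (-((n:ℝ) * τ d k)))
      = 2 * e (((d:ℝ)-1) * τ d k) := by
    rw [sum_Icc_int_eq (fun n => (n:ℂ) * e (-((n:ℝ) * τ d k))) hd]
    simp only [hFj]
    rw [← Finset.mul_sum, hsplit]
    set G := ∑ j ∈ Finset.range (2*d), w^j
    set T := ∑ j ∈ Finset.range (2*d), (j:ℂ)*w^j
    linear_combination e (((d:ℝ)-1) * τ d k) * hTval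
      + e (((d:ℝ)-1) * τ d k) * ((1:ℂ)-(d:ℂ)) * (w-1) * hGval
  -- rc * (w-1)^2
  have hrc2 : rc d k * (w-1)^2
      = ((Real.pi : ℂ) * Complex.I / (d:ℂ)) * (2 * e (((d:ℝ)-1) * τ d k)) := by
    rw [rc, mul_assoc]
    rw [show (∑ n ∈ Finset.Icc (1 - (d:ℤ)) (d:ℤ), (n:ℂ) * e (-((n:ℝ) * τ d k))) * (w-1)^2
        = (w - 1)^2 * (∑ n ∈ Finset.Icc (1 - (d:ℤ)) (d:ℤ), (n:ℂ) * e (-((n:ℝ) * τ d k))) by ring,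
      hSw]
  -- (w-1)^2 = -4 sin² w
  have hwsq : (w-1)^2 = -4 * ((Real.sin (Real.pi * τ d k) : ℝ):ℂ)^2 * w := by
    have h1 : w - 1 = e (-(τ d k / 2)) * (e (-(τ d k / 2)) - e (τ d k / 2)) := by
      rw [mul_sub, ← e_add, ← e_add]
      rw [show -(τ d k / 2) + -(τ d k / 2) = -(τ d k) by ring,
          show -(τ d k / 2) + τ d k / 2 = 0 by ring, e_zero, hw]
    have h2 : e (τ d k / 2) - e (-(τ d k / 2))
        = 2 * Complex.I * ((Real.sin (Real.pi * τ d k) : ℝ):ℂ) := by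
      have := e_sub_e_neg (τ d k / 2)
      rw [show 2 * Real.pi * (τ d k / 2) = Real.pi * τ d k by ring] at this
      exact this
    have h3 : e (-(τ d k / 2)) * e (-(τ d k / 2)) = w := by
      rw [← e_add, show -(τ d k / 2) + -(τ d k / 2) = -(τ d k) by ring, hw]
    calc (w-1)^2 = (e (-(τ d k / 2)) * e (-(τ d k / 2))) * (e (-(τ d k / 2)) - e (τ d k / 2))^2 := by
          rw [h1]; ring
      _ = w * (-(2 * Complex.I * ((Real.sin (Real.pi * τ d k) : ℝ):ℂ)))^2 := by
          rw [h3, show e (-(τ d k / 2)) - e (τ d k / 2) = -(e (τ d k / 2) - e (-(τ d k / 2))) by ring, h2]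
      _ = -4 * ((Real.sin (Real.pi * τ d k) : ℝ):ℂ)^2 * w := by
          rw [neg_sq, mul_pow, mul_pow, Complex.I_sq]
          ring
  -- e((d-1)τ) = e(dτ) * w
  have hedm1 : e (((d:ℝ)-1) * τ d k) = ((-1:ℂ)^(k+1) * Complex.I) * w := by
    rw [← e_d_tau hd hk1, hw, ← e_add]
    congr 1
    ring
  -- conclude
  have h4 : (-4 * ((Real.sin (Real.pi * τ d k) : ℝ):ℂ)^2 * w) ≠ 0 := by
    apply mul_ne_zero
    apply mul_ne_zero
    · norm_num
    · exact pow_ne_zero _ hsinne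
    · exact hwne
  have hC : ((Real.pi / (2*(d:ℝ)*(Real.sin (Real.pi * τ d k))^2) : ℝ) : ℂ)
      = (Real.pi:ℂ) / (2*(d:ℂ)*((Real.sin (Real.pi * τ d k) : ℝ):ℂ)^2) := by
    push_cast [-Complex.ofReal_sin]
    ring
  have hsq_ne : (w-1)^2 ≠ 0 := by rw [hwsq]; exact h4
  apply mul_right_cancel₀ hsq_ne
  rw [hrc2]
  conv_lhs => rw [hedm1]
  conv_rhs => rw [hwsq, hC]
  set S : ℂ := ((Real.sin (Real.pi * τ d k) : ℝ):ℂ) with hSdef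
  have hSne : S ≠ 0 := hsinne
  field_simp
  ring_nf
  rw [Complex.I_sq]
  ring

end ErrorTermAux
namespace ErrorTermAux
open Finset Complex

variable {d : ℕ}

lemma rc_norm_sum (hd : 0 < d) :
    ∑ k ∈ Finset.Icc 1 (2*d), ‖rc d k‖ = 2*Real.pi*(d:ℝ) := by
  have h1 : ∀ k ∈ Finset.Icc 1 (2*d), ((‖rc d k‖ : ℝ):ℂ) = (-1:ℂ)^(k+1) * rc d k := by
    intro k hk
    rw [Finset.mem_Icc] at hk
    rw [rc_eq hd hk.1 hk.2]
    have hr : 0 ≤ Real.pi / (2*(d:ℝ)*(Real.sin (Real.pi * τ d k))^2) := by positivity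
    rw [norm_mul, norm_pow, norm_neg, norm_one, one_pow, one_mul]
    rw [Complex.norm_real, Real.norm_eq_abs, _root_.abs_of_nonneg hr]
    rw [← mul_assoc, ← pow_add]
    have heven : Even ((k+1)+(k+1)) := ⟨k+1, rfl⟩
    rw [heven.neg_one_pow, one_mul]
  have h2 : ∑ k ∈ Finset.Icc 1 (2*d), ((-1:ℂ)^(k+1) * rc d k) = 2*(Real.pi:ℂ)*(d:ℂ) := by
    have hc := char_id hd (d:ℤ) (by omega) le_rfl
    have hrw : ∀ k ∈ Finset.Icc 1 (2*d),
        rc d k * e ((((d:ℤ)):ℝ) * τ d k) = ((-1:ℂ)^(k+1) * rc d k) * Complex.I := by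
      intro k hk
      rw [Finset.mem_Icc] at hk
      rw [show ((((d:ℤ))):ℝ) = ((d:ℕ):ℝ) by push_cast; ring, e_d_tau hd hk.1]
      ring
    rw [Finset.sum_congr rfl hrw, ← Finset.sum_mul] at hc
    have hc' : (∑ k ∈ Finset.Icc 1 (2*d), ((-1:ℂ)^(k+1) * rc d k)) * Complex.I
        = (2*(Real.pi:ℂ)*(d:ℂ)) * Complex.I := by
      rw [hc]; push_cast; try ring
    exact mul_right_cancel₀ Complex.I_ne_zero hc'
  have h3 : ((∑ k ∈ Finset.Icc 1 (2*d), ‖rc d k‖ : ℝ):ℂ) = ((2*Real.pi*(d:ℝ) : ℝ):ℂ) := by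
    push_cast
    rw [Finset.sum_congr rfl h1, h2]
  exact_mod_cast h3

lemma continuous_e : Continuous e := by
  unfold e
  exact Complex.continuous_exp.comp (by continuity)

lemma continuous_e_comp (c : ℝ) : Continuous fun s : ℝ => e (c*s) :=
  continuous_e.comp (continuous_const.mul continuous_id)

lemma riesz_rep (hd : 0 < d) (aa : ℤ → ℂ) (s : ℝ) :
    ∑ k ∈ Finset.Icc 1 (2*d), rc d k *
        (∑ n ∈ Finset.Icc (-(d:ℤ)) (d:ℤ), aa n * e ((n:ℝ) * (s + τ d k)))
      = ∑ n ∈ Finset.Icc (-(d:ℤ)) (d:ℤ), (2*(Real.pi:ℂ)*Complex.I*(n:ℂ)) * aa n * e ((n:ℝ)*s) := by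
  have hterm : ∀ k : ℕ, ∀ n ∈ Finset.Icc (-(d:ℤ)) (d:ℤ),
      rc d k * (aa n * e ((n:ℝ)*(s + τ d k)))
        = (aa n * e ((n:ℝ)*s)) * (rc d k * e ((n:ℝ) * τ d k)) := by
    intro k n _
    rw [show (n:ℝ)*(s + τ d k) = (n:ℝ)*s + (n:ℝ)*τ d k by ring, e_add]
    ring
  calc ∑ k ∈ Finset.Icc 1 (2*d), rc d k *
        (∑ n ∈ Finset.Icc (-(d:ℤ)) (d:ℤ), aa n * e ((n:ℝ) * (s + τ d k)))
      = ∑ k ∈ Finset.Icc 1 (2*d), ∑ n ∈ Finset.Icc (-(d:ℤ)) (d:ℤ),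
          (aa n * e ((n:ℝ)*s)) * (rc d k * e ((n:ℝ) * τ d k)) := by
        apply Finset.sum_congr rfl
        intro k _
        rw [Finset.mul_sum]
        exact Finset.sum_congr rfl (hterm k)
    _ = ∑ n ∈ Finset.Icc (-(d:ℤ)) (d:ℤ), ∑ k ∈ Finset.Icc 1 (2*d),
          (aa n * e ((n:ℝ)*s)) * (rc d k * e ((n:ℝ) * τ d k)) := Finset.sum_comm
    _ = ∑ n ∈ Finset.Icc (-(d:ℤ)) (d:ℤ), (2*(Real.pi:ℂ)*Complex.I*(n:ℂ)) * aa n * e ((n:ℝ)*s) := by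
        apply Finset.sum_congr rfl
        intro n hn
        rw [Finset.mem_Icc] at hn
        rw [← Finset.mul_sum, char_id hd n hn.1 hn.2]
        ring

lemma ftc_poly (aa : ℤ → ℂ) (x y : ℝ) :
    (∑ n ∈ Finset.Icc (-(d:ℤ)) (d:ℤ), aa n * e ((n:ℝ)*x))
      - (∑ n ∈ Finset.Icc (-(d:ℤ)) (d:ℤ), aa n * e ((n:ℝ)*y))
    = ∫ s in y..x, ∑ n ∈ Finset.Icc (-(d:ℤ)) (d:ℤ),
        (2*(Real.pi:ℂ)*Complex.I*(n:ℂ)) * aa n * e ((n:ℝ)*s) := by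
  have hsum := intervalIntegral.integral_finset_sum (μ := MeasureTheory.volume) (a := y) (b := x)
    (s := Finset.Icc (-(d:ℤ)) (d:ℤ))
    (f := fun (n:ℤ) (s:ℝ) => (2*(Real.pi:ℂ)*Complex.I*(n:ℂ)) * aa n * e ((n:ℝ)*s))
    (fun n _ => ((continuous_const.mul (continuous_e_comp (n:ℝ))).intervalIntegrable y x))
  rw [hsum]
  rw [← Finset.sum_sub_distrib]
  apply Finset.sum_congr rfl
  intro n _
  by_cases hn : n = 0
  · subst hn
    simp
  · have hc : (2*(Real.pi:ℂ)*Complex.I*(n:ℂ)) ≠ 0 := by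
      apply mul_ne_zero
      apply mul_ne_zero
      apply mul_ne_zero
      · norm_num
      · exact_mod_cast Complex.ofReal_ne_zero.mpr Real.pi_ne_zero
      · exact Complex.I_ne_zero
      · exact_mod_cast hn
    have hexp : ∀ s : ℝ, e ((n:ℝ)*s) = Complex.exp ((2*(Real.pi:ℂ)*Complex.I*(n:ℂ)) * (s:ℂ)) := by
      intro s
      unfold e
      congr 1
      push_cast
      ring
    simp only [hexp]
    rw [intervalIntegral.integral_const_mul, integral_exp_mul_complex hc]
    field_simp

end ErrorTermAux
namespace ErrorTermAux
open Finset Complex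

variable {d : ℕ}

lemma per_poly (hd : 0 < d) (aa : ℤ → ℂ) (F : ℝ → ℂ)
    (hF : ∀ t, F t = ∑ n ∈ Finset.Icc (-(d:ℤ)) (d:ℤ), aa n * e ((n:ℝ) * t))
    (Q : ℕ) (hQ : 0 < Q) :
    ∑ m ∈ Finset.Icc 1 Q, ∫ u in ((m:ℝ)-1)..(m:ℝ), ‖F (u/(Q:ℝ)) - F (((m:ℝ)-1)/(Q:ℝ))‖
      ≤ 2*Real.pi*(d:ℝ) * ∫ t in (0:ℝ)..1, ‖F t‖ := by
  have hQ' : (0:ℝ) < (Q:ℝ) := by exact_mod_cast hQ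
  have hFeq : F = fun t => ∑ n ∈ Finset.Icc (-(d:ℤ)) (d:ℤ), aa n * e ((n:ℝ) * t) := funext hF
  have hFc : Continuous F := by
    rw [hFeq]
    exact continuous_finset_sum _ fun n _ => continuous_const.mul (continuous_e_comp (n:ℝ))
  set g : ℝ → ℂ := fun s => ∑ n ∈ Finset.Icc (-(d:ℤ)) (d:ℤ),
      (2*(Real.pi:ℂ)*Complex.I*(n:ℂ)) * aa n * e ((n:ℝ)*s) with hg
  have hgc : Continuous g := by
    rw [hg]
    exact continuous_finset_sum _ fun n _ => continuous_const.mul (continuous_e_comp (n:ℝ))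
  have hgn : Continuous fun s => ‖g s‖ := hgc.norm
  -- Step 1: per-m bound
  have step1 : ∀ m ∈ Finset.Icc 1 Q,
      (∫ u in ((m:ℝ)-1)..(m:ℝ), ‖F (u/(Q:ℝ)) - F (((m:ℝ)-1)/(Q:ℝ))‖)
        ≤ ∫ t in (((m:ℝ)-1)/(Q:ℝ))..((m:ℝ)/(Q:ℝ)), ‖g t‖ := by
    intro m _
    have hb : ∀ u ∈ Set.Icc ((m:ℝ)-1) (m:ℝ),
        ‖F (u/(Q:ℝ)) - F (((m:ℝ)-1)/(Q:ℝ))‖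
          ≤ ∫ t in (((m:ℝ)-1)/(Q:ℝ))..((m:ℝ)/(Q:ℝ)), ‖g t‖ := by
      intro u hu
      have hdiff : F (u/(Q:ℝ)) - F (((m:ℝ)-1)/(Q:ℝ))
          = ∫ s in ((((m:ℝ)-1))/(Q:ℝ))..(u/(Q:ℝ)), g s := by
        rw [hF, hF]
        exact ftc_poly aa _ _
      rw [hdiff]
      have h1 : (((m:ℝ)-1))/(Q:ℝ) ≤ u/(Q:ℝ) := by gcongr; exact hu.1
      have h2 : u/(Q:ℝ) ≤ (m:ℝ)/(Q:ℝ) := by gcongr; exact hu.2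
      calc ‖∫ s in ((((m:ℝ)-1))/(Q:ℝ))..(u/(Q:ℝ)), g s‖
          ≤ ∫ s in ((((m:ℝ)-1))/(Q:ℝ))..(u/(Q:ℝ)), ‖g s‖ :=
            intervalIntegral.norm_integral_le_integral_norm h1
        _ ≤ ∫ s in ((((m:ℝ)-1))/(Q:ℝ))..((m:ℝ)/(Q:ℝ)), ‖g s‖ :=
            intervalIntegral.integral_mono_interval le_rfl h1 h2
              (MeasureTheory.ae_of_all _ fun s => norm_nonneg _)
              (hgn.intervalIntegrable _ _)
    have hmono := intervalIntegral.integral_mono_on (by linarith : (m:ℝ)-1 ≤ (m:ℝ))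
      (((hFc.comp (continuous_id.div_const (Q:ℝ))).sub continuous_const).norm.intervalIntegrable _ _)
      (intervalIntegrable_const (μ := MeasureTheory.volume))
      hb
    calc (∫ u in ((m:ℝ)-1)..(m:ℝ), ‖F (u/(Q:ℝ)) - F (((m:ℝ)-1)/(Q:ℝ))‖)
        ≤ ∫ _u in ((m:ℝ)-1)..(m:ℝ), (∫ t in (((m:ℝ)-1)/(Q:ℝ))..((m:ℝ)/(Q:ℝ)), ‖g t‖) := hmono
      _ = ∫ t in (((m:ℝ)-1)/(Q:ℝ))..((m:ℝ)/(Q:ℝ)), ‖g t‖ := by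
          rw [intervalIntegral.integral_const]
          rw [show (m:ℝ) - ((m:ℝ)-1) = 1 by ring, one_smul]
  -- Step 2: the sum of the g-integrals telescopes
  have step2 : ∑ m ∈ Finset.Icc 1 Q, (∫ t in (((m:ℝ)-1)/(Q:ℝ))..((m:ℝ)/(Q:ℝ)), ‖g t‖)
      = ∫ t in (0:ℝ)..1, ‖g t‖ := by
    rw [sum_Icc_shift (fun m => ∫ t in (((m:ℝ)-1)/(Q:ℝ))..((m:ℝ)/(Q:ℝ)), ‖g t‖) Q]
    have hcongr : ∀ i ∈ Finset.range Q,
        (∫ t in ((((i+1:ℕ):ℝ)-1)/(Q:ℝ))..(((i+1:ℕ):ℝ)/(Q:ℝ)), ‖g t‖)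
          = ∫ t in ((i:ℝ)/(Q:ℝ))..(((i+1:ℕ):ℝ)/(Q:ℝ)), ‖g t‖ := by
      intro i _
      congr 1
      push_cast
      ring
    rw [Finset.sum_congr rfl hcongr]
    have := intervalIntegral.sum_integral_adjacent_intervals
      (a := fun i : ℕ => (i:ℝ)/(Q:ℝ)) (n := Q)
      (f := fun t => ‖g t‖) (μ := MeasureTheory.volume)
      (fun k _ => hgn.intervalIntegrable _ _)
    rw [this]
    congr 1
    · norm_num
    · rw [div_self hQ'.ne']
  -- Step 3: Bernstein bound for the g-integral
  have step3 : (∫ t in (0:ℝ)..1, ‖g t‖) ≤ 2*Real.pi*(d:ℝ) * ∫ t in (0:ℝ)..1, ‖F t‖ := by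
    have hpt : ∀ s : ℝ, ‖g s‖ ≤ ∑ k ∈ Finset.Icc 1 (2*d), ‖rc d k‖ * ‖F (s + τ d k)‖ := by
      intro s
      have hrep : g s = ∑ k ∈ Finset.Icc 1 (2*d), rc d k * F (s + τ d k) := by
        rw [hg]
        simp only [hF]
        exact (riesz_rep hd aa s).symm
      rw [hrep]
      refine (norm_sum_le _ _).trans (le_of_eq ?_)
      exact Finset.sum_congr rfl fun k _ => norm_mul _ _
    have hFn : Continuous fun t => ‖F t‖ := hFc.norm
    have hper : Function.Periodic (fun t => ‖F t‖) 1 := by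
      intro t
      simp only
      congr 1
      rw [hF, hF]
      apply Finset.sum_congr rfl
      intro n _
      rw [show (n:ℝ) * (t+1) = (n:ℝ)*t + (n:ℤ) by push_cast; ring, e_add, e_int, mul_one]
    have htrans : ∀ k : ℕ, (∫ t in (0:ℝ)..1, ‖F (t + τ d k)‖) = ∫ t in (0:ℝ)..1, ‖F t‖ := by
      intro k
      rw [intervalIntegral.integral_comp_add_right (fun t => ‖F t‖) (τ d k)]
      have := hper.intervalIntegral_add_eq (τ d k) 0
      rw [zero_add] at this
      rw [show (0:ℝ) + τ d k = τ d k by ring, show (1:ℝ) + τ d k = τ d k + 1 by ring]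
      exact this
    calc (∫ t in (0:ℝ)..1, ‖g t‖)
        ≤ ∫ t in (0:ℝ)..1, (∑ k ∈ Finset.Icc 1 (2*d), ‖rc d k‖ * ‖F (t + τ d k)‖) := by
          apply intervalIntegral.integral_mono_on zero_le_one
            (hgn.intervalIntegrable _ _)
            ((continuous_finset_sum _ fun k _ => continuous_const.mul
              ((hFc.comp (continuous_id.add continuous_const)).norm)).intervalIntegrable _ _)
            (fun t _ => hpt t)
      _ = ∑ k ∈ Finset.Icc 1 (2*d), ‖rc d k‖ * ∫ t in (0:ℝ)..1, ‖F (t + τ d k)‖ := by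
          have hsum := intervalIntegral.integral_finset_sum (μ := MeasureTheory.volume)
            (a := (0:ℝ)) (b := (1:ℝ)) (s := Finset.Icc 1 (2*d))
            (f := fun (k:ℕ) (t:ℝ) => ‖rc d k‖ * ‖F (t + τ d k)‖)
            (fun k _ => (continuous_const.mul
              ((hFc.comp (continuous_id.add continuous_const)).norm)).intervalIntegrable _ _)
          rw [hsum]
          exact Finset.sum_congr rfl fun k _ => intervalIntegral.integral_const_mul _ _
      _ = ∑ k ∈ Finset.Icc 1 (2*d), ‖rc d k‖ * ∫ t in (0:ℝ)..1, ‖F t‖ := by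
          exact Finset.sum_congr rfl fun k _ => by rw [htrans k]
      _ = 2*Real.pi*(d:ℝ) * ∫ t in (0:ℝ)..1, ‖F t‖ := by
          rw [← Finset.sum_mul, rc_norm_sum hd]
  calc ∑ m ∈ Finset.Icc 1 Q, ∫ u in ((m:ℝ)-1)..(m:ℝ), ‖F (u/(Q:ℝ)) - F (((m:ℝ)-1)/(Q:ℝ))‖
      ≤ ∑ m ∈ Finset.Icc 1 Q, (∫ t in (((m:ℝ)-1)/(Q:ℝ))..((m:ℝ)/(Q:ℝ)), ‖g t‖) :=
        Finset.sum_le_sum step1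
    _ = ∫ t in (0:ℝ)..1, ‖g t‖ := step2
    _ ≤ 2*Real.pi*(d:ℝ) * ∫ t in (0:ℝ)..1, ‖F t‖ := step3

end ErrorTermAux
open ErrorTermAux in
/-- The error term `T_2` in Proposition 4.1: with `k_1 < ⋯ < k_J` the elements of `I(q;s)`,
`k_j = b_{k_j} q + s`, and each `f_{k_j}` a trigonometric polynomial of degree at most `d_1`,
`T_2 = (1/(q d_2)) ∑_{m=1}^{q d_2} ∫_{m−1}^m |∑_j (f_{k_j}(u/(q d_2)) − f_{k_j}((m−1)/(q d_2))) e(b_{k_j} u)| du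
  ≤ (2π d_1/(q d_2)) ∑_j ‖f_{k_j}‖_{L^1([0,1])}`. -/
theorem error_term_bound
    (d1 d2 q : ℕ) (hd1 : 0 < d1) (hd2 : 0 < d2) (hq : 0 < q)
    (s : ℤ) (J : ℕ) (k : Fin J → ℤ) (hk : StrictMono k)
    (b : Fin J → ℤ) (hb : ∀ j, k j = b j * (q : ℤ) + s)
    (a : Fin J → ℤ → ℂ) (f : Fin J → ℝ → ℂ)
    (hf : ∀ j, ∀ t : ℝ,
      f j t = ∑ n ∈ Finset.Icc (-(d1 : ℤ)) (d1 : ℤ), a j n * e ((n : ℝ) * t)) :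
    (1 / ((q : ℝ) * (d2 : ℝ))) * ∑ m ∈ Finset.Icc 1 (q * d2),
        ∫ u in ((m : ℝ) - 1)..(m : ℝ),
          ‖∑ j, (f j (u / ((q : ℝ) * (d2 : ℝ))) - f j (((m : ℝ) - 1) / ((q : ℝ) * (d2 : ℝ)))) *
              e ((b j : ℝ) * u)‖ ≤
      (2 * Real.pi * (d1 : ℝ) / ((q : ℝ) * (d2 : ℝ))) *
        ∑ j, ∫ t in (0:ℝ)..1, ‖f j t‖ := by
  have hQ : 0 < q * d2 := Nat.mul_pos hq hd2
  have hQR : ((q * d2 : ℕ) : ℝ) = (q:ℝ) * (d2:ℝ) := by push_cast; ring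
  have hQ' : (0:ℝ) < (q:ℝ) * (d2:ℝ) := by
    rw [← hQR]; exact_mod_cast hQ
  -- continuity of the f j
  have hfc : ∀ j, Continuous (f j) := by
    intro j
    rw [funext (hf j)]
    exact continuous_finset_sum _ fun n _ => continuous_const.mul (continuous_e_comp (n:ℝ))
  -- pointwise triangle inequality and integral comparison per m
  have hm_bound : ∀ m ∈ Finset.Icc 1 (q * d2),
      (∫ u in ((m : ℝ) - 1)..(m : ℝ),
          ‖∑ j, (f j (u / ((q : ℝ) * (d2 : ℝ))) - f j (((m : ℝ) - 1) / ((q : ℝ) * (d2 : ℝ)))) *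
              e ((b j : ℝ) * u)‖)
        ≤ ∑ j, ∫ u in ((m : ℝ) - 1)..(m : ℝ),
            ‖f j (u / ((q : ℝ) * (d2 : ℝ))) - f j (((m : ℝ) - 1) / ((q : ℝ) * (d2 : ℝ)))‖ := by
    intro m _
    have hcont : ∀ j : Fin J, Continuous fun u : ℝ =>
        ‖f j (u / ((q : ℝ) * (d2 : ℝ))) - f j (((m : ℝ) - 1) / ((q : ℝ) * (d2 : ℝ)))‖ :=
      fun j => (((hfc j).comp (continuous_id.div_const _)).sub continuous_const).norm
    have hcont2 : Continuous fun u : ℝ =>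
        ‖∑ j, (f j (u / ((q : ℝ) * (d2 : ℝ))) - f j (((m : ℝ) - 1) / ((q : ℝ) * (d2 : ℝ)))) *
            e ((b j : ℝ) * u)‖ := by
      apply Continuous.norm
      apply continuous_finset_sum
      intro j _
      exact (((hfc j).comp (continuous_id.div_const _)).sub continuous_const).mul
        (continuous_e_comp _)
    calc (∫ u in ((m : ℝ) - 1)..(m : ℝ),
          ‖∑ j, (f j (u / ((q : ℝ) * (d2 : ℝ))) - f j (((m : ℝ) - 1) / ((q : ℝ) * (d2 : ℝ)))) *
              e ((b j : ℝ) * u)‖)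
        ≤ ∫ u in ((m : ℝ) - 1)..(m : ℝ),
            ∑ j, ‖f j (u / ((q : ℝ) * (d2 : ℝ))) - f j (((m : ℝ) - 1) / ((q : ℝ) * (d2 : ℝ)))‖ := by
          apply intervalIntegral.integral_mono_on (by linarith : (m:ℝ)-1 ≤ (m:ℝ))
            (hcont2.intervalIntegrable _ _)
            ((continuous_finset_sum _ fun j _ => hcont j).intervalIntegrable _ _)
          intro u _
          refine (norm_sum_le _ _).trans (le_of_eq ?_)
          apply Finset.sum_congr rfl
          intro j _
          rw [norm_mul, e_norm, mul_one]
      _ = ∑ j, ∫ u in ((m : ℝ) - 1)..(m : ℝ),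
            ‖f j (u / ((q : ℝ) * (d2 : ℝ))) - f j (((m : ℝ) - 1) / ((q : ℝ) * (d2 : ℝ)))‖ := by
          exact intervalIntegral.integral_finset_sum (fun j _ => (hcont j).intervalIntegrable _ _)
  -- sum over m, swap, and apply per_poly
  have hswap :
      ∑ m ∈ Finset.Icc 1 (q * d2), ∑ j, (∫ u in ((m : ℝ) - 1)..(m : ℝ),
          ‖f j (u / ((q : ℝ) * (d2 : ℝ))) - f j (((m : ℝ) - 1) / ((q : ℝ) * (d2 : ℝ)))‖)
        = ∑ j, ∑ m ∈ Finset.Icc 1 (q * d2), (∫ u in ((m : ℝ) - 1)..(m : ℝ),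
          ‖f j (u / ((q : ℝ) * (d2 : ℝ))) - f j (((m : ℝ) - 1) / ((q : ℝ) * (d2 : ℝ)))‖) :=
    Finset.sum_comm
  have hper : ∀ j : Fin J,
      ∑ m ∈ Finset.Icc 1 (q * d2), (∫ u in ((m : ℝ) - 1)..(m : ℝ),
          ‖f j (u / ((q : ℝ) * (d2 : ℝ))) - f j (((m : ℝ) - 1) / ((q : ℝ) * (d2 : ℝ)))‖)
        ≤ 2*Real.pi*(d1:ℝ) * ∫ t in (0:ℝ)..1, ‖f j t‖ := by
    intro j
    have := per_poly hd1 (a j) (f j) (hf j) (q * d2) hQ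
    rw [hQR] at this
    exact this
  calc (1 / ((q : ℝ) * (d2 : ℝ))) * ∑ m ∈ Finset.Icc 1 (q * d2),
        ∫ u in ((m : ℝ) - 1)..(m : ℝ),
          ‖∑ j, (f j (u / ((q : ℝ) * (d2 : ℝ))) - f j (((m : ℝ) - 1) / ((q : ℝ) * (d2 : ℝ)))) *
              e ((b j : ℝ) * u)‖
      ≤ (1 / ((q : ℝ) * (d2 : ℝ))) * ∑ m ∈ Finset.Icc 1 (q * d2),
          ∑ j, (∫ u in ((m : ℝ) - 1)..(m : ℝ),
            ‖f j (u / ((q : ℝ) * (d2 : ℝ))) - f j (((m : ℝ) - 1) / ((q : ℝ) * (d2 : ℝ)))‖) := by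
        apply mul_le_mul_of_nonneg_left _ (by positivity)
        exact Finset.sum_le_sum hm_bound
    _ = (1 / ((q : ℝ) * (d2 : ℝ))) * ∑ j, ∑ m ∈ Finset.Icc 1 (q * d2),
          (∫ u in ((m : ℝ) - 1)..(m : ℝ),
            ‖f j (u / ((q : ℝ) * (d2 : ℝ))) - f j (((m : ℝ) - 1) / ((q : ℝ) * (d2 : ℝ)))‖) := by
        rw [hswap]
    _ ≤ (1 / ((q : ℝ) * (d2 : ℝ))) * ∑ j, (2*Real.pi*(d1:ℝ) * ∫ t in (0:ℝ)..1, ‖f j t‖) := by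
        apply mul_le_mul_of_nonneg_left _ (by positivity)
        exact Finset.sum_le_sum (fun j _ => hper j)
    _ = (2 * Real.pi * (d1 : ℝ) / ((q : ℝ) * (d2 : ℝ))) * ∑ j, ∫ t in (0:ℝ)..1, ‖f j t‖ := by
        rw [Finset.mul_sum, Finset.mul_sum]
        apply Finset.sum_congr rfl
        intro j _
        field_simp
end
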